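/- arXiv:1202.2803 — 6 statements merged into one kernel-verified Lean document; each statement's English description precedes it below -/
import Mathlib

section
/- Let γ_{f_i}, γ_{g_i} (i = 1,…,N) be mutually independent exponential random variables with means σ_{f_i}², σ_{g_i}², and let r = argmax_i min{γ_{f_i}, γ_{g_i}}. Then for all γ ≥ 0, P(γ_{f_r} ≤ γ) = ∏_{i=1}^N (1 − e^{−(1/σ_{f_i}²+1/σ_{g_i}²)γ}) − Σ_{j=1}^N (1/σ_{g_j}²) e^{−γ/σ_{f_j}²} ∫_0^γ e^{−β/σ_{g_j}²} ∏_{i≠j} (1 − e^{−(1/σ_{f_i}²+1/σ_{g_i}²)β}) dβ. -/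
open MeasureTheory ProbabilityTheory Real Set
open scoped ENNReal

section Aux
variable {Ω : Type*} [MeasurableSpace Ω] (P : Measure Ω) [IsProbabilityMeasure P]

lemma aux_compl {s : Set Ω} (hs : MeasurableSet s) {a : ℝ} (ha : 0 ≤ a)
    (h : (P s).toReal = 1 - a) : P sᶜ = ENNReal.ofReal a := by
  have h1 : a ≤ 1 := by nlinarith [ENNReal.toReal_nonneg (a := P s)]
  have hPs : P s = ENNReal.ofReal (1 - a) := by
    rw [← ENNReal.ofReal_toReal (measure_ne_top P s), h]
  have h2 : (1 : ℝ≥0∞) = ENNReal.ofReal 1 := by simp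
  rw [measure_compl hs (measure_ne_top P s), measure_univ, hPs, h2,
    ← ENNReal.ofReal_sub 1 (by linarith : (0:ℝ) ≤ 1 - a)]
  norm_num

lemma aux_compl' {s : Set Ω} (hs : MeasurableSet s) {a : ℝ} (ha : 0 ≤ a) (ha1 : a ≤ 1)
    (h : P s = ENNReal.ofReal a) : P sᶜ = ENNReal.ofReal (1 - a) := by
  refine aux_compl P hs (by linarith) ?_
  rw [h, ENNReal.toReal_ofReal ha]; ring

lemma aux_cdf {Y : Ω → ℝ} {c : ℝ}
    (hcdf : ∀ x, 0 ≤ x → (P {ω | Y ω ≤ x}).toReal = 1 - Real.exp (-(c * x)))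
    {x : ℝ} (hx : 0 ≤ x) :
    P {ω | Y ω ≤ x} = ENNReal.ofReal (1 - Real.exp (-(c * x))) := by
  rw [← ENNReal.ofReal_toReal (measure_ne_top P _), hcdf x hx]

lemma aux_surv {Y : Ω → ℝ} (hY : Measurable Y) {c : ℝ}
    (hcdf : ∀ x, 0 ≤ x → (P {ω | Y ω ≤ x}).toReal = 1 - Real.exp (-(c * x)))
    {x : ℝ} (hx : 0 ≤ x) : P {ω | x < Y ω} = ENNReal.ofReal (Real.exp (-(c * x))) := by
  have hset : {ω | x < Y ω} = {ω | Y ω ≤ x}ᶜ := by ext ω; simp [not_le]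
  rw [hset]
  exact aux_compl P (hY measurableSet_Iic) (exp_pos _).le (hcdf x hx)

lemma aux_atom {Y : Ω → ℝ} (hY : Measurable Y) {c : ℝ} (hpos : ∀ ω, 0 ≤ Y ω)
    (hcdf : ∀ x, 0 ≤ x → (P {ω | Y ω ≤ x}).toReal = 1 - Real.exp (-(c * x)))
    (t : ℝ) : P {ω | Y ω = t} = 0 := by
  rcases lt_trichotomy t 0 with ht | ht | ht
  · have hset : {ω | Y ω = t} ⊆ (∅ : Set Ω) :=
      fun ω hω => absurd (hω ▸ hpos ω) (not_le.mpr ht)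
    exact measure_mono_null hset (by simp)
  · subst ht
    have h0 : P {ω | Y ω ≤ (0:ℝ)} = 0 := by rw [aux_cdf P hcdf le_rfl]; simp
    exact measure_mono_null (fun ω (hω : Y ω = 0) => le_of_eq hω) h0
  · -- t > 0 : squeeze with left limits
    have key : ∀ n : ℕ, (P {ω | Y ω = t}).toReal
        ≤ Real.exp (-(c * (t - t / (n + 1)))) - Real.exp (-(c * t)) := by
      intro n
      have hsn : 0 ≤ t - t / (n + 1) := by
        have h1 : t / (n + 1) ≤ t := by
          apply div_le_self ht.le; linarith [Nat.cast_nonneg (α := ℝ) n]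
        linarith
      have hslt : t - t / (n + 1) < t := by
        have : 0 < t / (n + 1) := by positivity
        linarith
      have hsub : {ω | Y ω = t} ⊆ {ω | Y ω ≤ t} \ {ω | Y ω ≤ t - t / (n + 1)} := by
        intro ω hω
        exact ⟨le_of_eq hω, by simp only [mem_setOf_eq] at hω ⊢; linarith⟩
      calc (P {ω | Y ω = t}).toReal
          ≤ (P ({ω | Y ω ≤ t} \ {ω | Y ω ≤ t - t / (n + 1)})).toReal := by
            apply ENNReal.toReal_mono (measure_ne_top P _) (measure_mono hsub)
        _ = Real.exp (-(c * (t - t / (n + 1)))) - Real.exp (-(c * t)) := by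
            have hss : {ω | Y ω ≤ t - t / (n + 1)} ⊆ {ω | Y ω ≤ t} :=
              fun ω hω => le_trans hω hslt.le
            have hdiff := measure_diff (μ := P) hss
              (hY measurableSet_Iic).nullMeasurableSet (measure_ne_top P _)
            rw [hdiff, ENNReal.toReal_sub_of_le (measure_mono hss) (measure_ne_top P _),
              hcdf t ht.le, hcdf _ hsn]
            ring
    have htends : Filter.Tendsto
        (fun n : ℕ => Real.exp (-(c * (t - t / (n + 1)))) - Real.exp (-(c * t)))
        Filter.atTop (nhds 0) := by
      have h1 : Filter.Tendsto (fun n : ℕ => t - t / (n + 1)) Filter.atTop (nhds t) := by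
        have h2 : Filter.Tendsto (fun n : ℕ => t / (n + 1)) Filter.atTop (nhds 0) := by
          have h3 := (tendsto_one_div_add_atTop_nhds_zero_nat).const_mul t
          simpa [div_eq_mul_inv, one_div] using h3
        simpa using (tendsto_const_nhds (x := t)).sub h2
      have h2 : Filter.Tendsto (fun n : ℕ => Real.exp (-(c * (t - t / (n + 1)))))
          Filter.atTop (nhds (Real.exp (-(c * t)))) := by
        exact (Real.continuous_exp.tendsto _).comp (((continuous_const.mul continuous_id).neg).tendsto t |>.comp h1)
      simpa using h2.sub (tendsto_const_nhds (x := Real.exp (-(c * t))))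
    have hle : (P {ω | Y ω = t}).toReal ≤ 0 := ge_of_tendsto' htends key
    have := ENNReal.toReal_nonneg (a := P {ω | Y ω = t})
    have h0 : (P {ω | Y ω = t}).toReal = 0 := le_antisymm hle this
    exact (ENNReal.toReal_eq_zero_iff _).mp h0 |>.resolve_right (measure_ne_top P _)

end Aux


section Aux2
variable {Ω : Type*} [MeasurableSpace Ω] (P : Measure Ω) [IsProbabilityMeasure P]

lemma expMeasure_eq_withDensity (c : ℝ) :
    expMeasure c = volume.withDensity (exponentialPDF c) := rfl

lemma measurable_exponentialPDF (c : ℝ) : Measurable (exponentialPDF c) := by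
  have : exponentialPDF c = fun x => ENNReal.ofReal (exponentialPDFReal c x) := rfl
  rw [this]
  exact (measurable_exponentialPDFReal c).ennreal_ofReal

lemma aux_map {Y : Ω → ℝ} (hY : Measurable Y) {c : ℝ} (hc : 0 < c) (hpos : ∀ ω, 0 ≤ Y ω)
    (hcdf : ∀ x, 0 ≤ x → (P {ω | Y ω ≤ x}).toReal = 1 - Real.exp (-(c * x))) :
    P.map Y = expMeasure c := by
  have h1 : IsProbabilityMeasure (P.map Y) := Measure.isProbabilityMeasure_map hY.aemeasurable
  refine Measure.ext_of_Iic (P.map Y) (expMeasure c) (fun x => ?_)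
  rw [Measure.map_apply hY measurableSet_Iic]
  have hexp : expMeasure c (Iic x) = ∫⁻ y in Iic x, exponentialPDF c y := by
    rw [expMeasure_eq_withDensity, withDensity_apply _ measurableSet_Iic]
  rw [hexp, lintegral_exponentialPDF_eq_antiDeriv hc x]
  by_cases hx : 0 ≤ x
  · rw [if_pos hx]
    have : Y ⁻¹' Iic x = {ω | Y ω ≤ x} := rfl
    rw [this, ← ENNReal.ofReal_toReal (measure_ne_top P _), hcdf x hx]
  · have hempty : Y ⁻¹' Iic x ⊆ (∅ : Set Ω) := by
      intro ω hω
      exact absurd (le_trans (hpos ω) hω) hx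
    rw [if_neg hx, ENNReal.ofReal_zero]
    exact measure_mono_null hempty measure_empty
end Aux2


section Aux3
variable {Ω : Type*} [MeasurableSpace Ω] (P : Measure Ω) [IsProbabilityMeasure P]
  {N : ℕ} (γf γg : Fin N → Ω → ℝ)

lemma aux_measX (hf : ∀ i, Measurable (γf i)) (hg : ∀ i, Measurable (γg i)) :
    ∀ k, Measurable (Sum.elim γf γg k) := by
  intro k
  cases k with
  | inl i => exact hf i
  | inr i => exact hg i

/-- Mutual independence (finite intersections form) of the blockwise minima. -/
lemma aux_indM (hf : ∀ i, Measurable (γf i)) (hg : ∀ i, Measurable (γg i))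
    (hind : iIndepFun (Sum.elim γf γg) P)
    (s : Finset (Fin N)) (B : Fin N → Set ℝ) (hB : ∀ i, MeasurableSet (B i)) :
    P (⋂ i ∈ s, (fun ω => min (γf i ω) (γg i ω)) ⁻¹' B i)
      = ∏ i ∈ s, P ((fun ω => min (γf i ω) (γg i ω)) ⁻¹' B i) := by
  classical
  induction s using Finset.induction_on with
  | empty => simp
  | @insert a s ha ih =>
    rw [Finset.set_biInter_insert, Finset.prod_insert ha, ← ih]
    set S : Finset (Fin N ⊕ Fin N) := {Sum.inl a, Sum.inr a} with hS
    set T : Finset (Fin N ⊕ Fin N) := s.biUnion (fun i => {Sum.inl i, Sum.inr i}) with hT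
    have hmemT1 : ∀ i : Fin N, i ∈ s → Sum.inl i ∈ T := by
      intro i hi; rw [hT]; exact Finset.mem_biUnion.mpr ⟨i, hi, by simp⟩
    have hmemT2 : ∀ i : Fin N, i ∈ s → Sum.inr i ∈ T := by
      intro i hi; rw [hT]; exact Finset.mem_biUnion.mpr ⟨i, hi, by simp⟩
    have hST : Disjoint S T := by
      rw [Finset.disjoint_left]
      intro k hk hkT
      rw [hT] at hkT
      rcases Finset.mem_biUnion.mp hkT with ⟨i, hi, hki⟩
      rw [hS] at hk
      simp only [Finset.mem_insert, Finset.mem_singleton] at hk hki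
      rcases hk with rfl | rfl <;> rcases hki with h | h <;> simp_all <;> exact ha (h ▸ hi)
    have hIndST := hind.indepFun_finset S T hST (aux_measX γf γg hf hg)
    let φ : (∀ _ : S, ℝ) → ℝ :=
      fun v => min (v ⟨Sum.inl a, by rw [hS]; simp⟩) (v ⟨Sum.inr a, by rw [hS]; simp⟩)
    let ψ : (∀ _ : T, ℝ) → (∀ _ : s, ℝ) :=
      fun v i => min (v ⟨Sum.inl i.1, hmemT1 i.1 i.2⟩) (v ⟨Sum.inr i.1, hmemT2 i.1 i.2⟩)
    have hφ : Measurable φ := (measurable_pi_apply _).min (measurable_pi_apply _)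
    have hψ : Measurable ψ :=
      measurable_pi_lambda _ (fun i => (measurable_pi_apply _).min (measurable_pi_apply _))
    have hIndc := hIndST.comp hφ hψ
    have key := hIndc.measure_inter_preimage_eq_mul (B a)
      (Set.pi Set.univ (fun i : s => B i.1)) (hB a) (MeasurableSet.univ_pi (fun i => hB i.1))
    have e1 : (φ ∘ fun ω (k : S) => Sum.elim γf γg k ω) ⁻¹' (B a)
        = (fun ω => min (γf a ω) (γg a ω)) ⁻¹' B a := rfl
    have e2 : (ψ ∘ fun ω (k : T) => Sum.elim γf γg k ω) ⁻¹' (Set.pi Set.univ (fun i : s => B i.1))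
        = ⋂ i ∈ s, (fun ω => min (γf i ω) (γg i ω)) ⁻¹' B i := by
      ext ω
      simp only [Set.mem_preimage, Function.comp_apply, Set.mem_pi, Set.mem_univ, forall_true_left,
        Set.mem_iInter]
      constructor
      · intro h i hi; exact h ⟨i, hi⟩
      · intro h i; exact h i.1 i.2
    rw [e1, e2] at key
    exact key
end Aux3


section Aux4
variable {Ω : Type*} [MeasurableSpace Ω] (P : Measure Ω) [IsProbabilityMeasure P]
  {N : ℕ} (γf γg : Fin N → Ω → ℝ)

/-- `γf j` is independent of the tuple of all other coordinates. -/
lemma aux_indD (hf : ∀ i, Measurable (γf i)) (hg : ∀ i, Measurable (γg i))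
    (hind : iIndepFun (Sum.elim γf γg) P) (j : Fin N) :
    IndepFun (γf j)
      (fun ω (k : (Finset.univ.erase (Sum.inl j) : Finset (Fin N ⊕ Fin N))) =>
        Sum.elim γf γg k.1 ω) P := by
  classical
  have hX : ∀ k, Measurable (Sum.elim γf γg k) := by
    intro k; cases k with
    | inl i => exact hf i
    | inr i => exact hg i
  have hdisj : Disjoint ({Sum.inl j} : Finset (Fin N ⊕ Fin N))
      (Finset.univ.erase (Sum.inl j)) := by
    rw [Finset.disjoint_left]
    intro k hk hk2
    rw [Finset.mem_singleton] at hk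
    exact (Finset.mem_erase.mp hk2).1 hk
  have h := hind.indepFun_finset {Sum.inl j} (Finset.univ.erase (Sum.inl j)) hdisj hX
  let φ : (∀ _ : ({Sum.inl j} : Finset (Fin N ⊕ Fin N)), ℝ) → ℝ :=
    fun v => v ⟨Sum.inl j, Finset.mem_singleton_self _⟩
  have hφ : Measurable φ := measurable_pi_apply _
  have h2 := h.comp hφ measurable_id
  exact h2

/-- `γg j` is independent of the tuple of minima over the other blocks. -/
lemma aux_indQ (hf : ∀ i, Measurable (γf i)) (hg : ∀ i, Measurable (γg i))
    (hind : iIndepFun (Sum.elim γf γg) P) (j : Fin N) :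
    IndepFun (γg j)
      (fun ω (i : (Finset.univ.erase j : Finset (Fin N))) =>
        min (γf i.1 ω) (γg i.1 ω)) P := by
  classical
  have hX : ∀ k, Measurable (Sum.elim γf γg k) := by
    intro k; cases k with
    | inl i => exact hf i
    | inr i => exact hg i
  set T : Finset (Fin N ⊕ Fin N) :=
    (Finset.univ.erase j).biUnion (fun i => {Sum.inl i, Sum.inr i}) with hT
  have hmemT1 : ∀ i : Fin N, i ∈ Finset.univ.erase j → Sum.inl i ∈ T := by
    intro i hi; rw [hT]; exact Finset.mem_biUnion.mpr ⟨i, hi, by simp⟩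
  have hmemT2 : ∀ i : Fin N, i ∈ Finset.univ.erase j → Sum.inr i ∈ T := by
    intro i hi; rw [hT]; exact Finset.mem_biUnion.mpr ⟨i, hi, by simp⟩
  have hdisj : Disjoint ({Sum.inr j} : Finset (Fin N ⊕ Fin N)) T := by
    rw [Finset.disjoint_left]
    intro k hk hkT
    rw [Finset.mem_singleton] at hk
    subst hk
    rw [hT] at hkT
    rcases Finset.mem_biUnion.mp hkT with ⟨i, hi, hki⟩
    simp only [Finset.mem_insert, Finset.mem_singleton] at hki
    rcases hki with h | h
    · exact Sum.inl_ne_inr h.symm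
    · exact (Finset.mem_erase.mp hi).1 (Sum.inr_injective h.symm)
  have h := hind.indepFun_finset {Sum.inr j} T hdisj hX
  let φ : (∀ _ : ({Sum.inr j} : Finset (Fin N ⊕ Fin N)), ℝ) → ℝ :=
    fun v => v ⟨Sum.inr j, Finset.mem_singleton_self _⟩
  let ψ : (∀ _ : T, ℝ) → (∀ _ : (Finset.univ.erase j : Finset (Fin N)), ℝ) :=
    fun v i => min (v ⟨Sum.inl i.1, hmemT1 i.1 i.2⟩) (v ⟨Sum.inr i.1, hmemT2 i.1 i.2⟩)
  have hφ : Measurable φ := measurable_pi_apply _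
  have hψ : Measurable ψ :=
    measurable_pi_lambda _ (fun i => (measurable_pi_apply _).min (measurable_pi_apply _))
  exact h.comp hφ hψ
end Aux4


/-- Proposition 1: CDF of the source-to-selected-relay gain `γ_{f_r}`. -/
theorem cdf_selected_relay_gain
    {Ω : Type*} [MeasurableSpace Ω] (P : Measure Ω) [IsProbabilityMeasure P]
    (N : ℕ) (hN : 1 ≤ N) (γf γg : Fin N → Ω → ℝ)
    (hf : ∀ i, Measurable (γf i)) (hg : ∀ i, Measurable (γg i))
    (sf sg : Fin N → ℝ) (hsf : ∀ i, 0 < sf i) (hsg : ∀ i, 0 < sg i)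
    (hind : iIndepFun (Sum.elim γf γg) P)
    (hfpos : ∀ i ω, 0 ≤ γf i ω) (hgpos : ∀ i ω, 0 ≤ γg i ω)
    (hfe : ∀ i, ∀ x : ℝ, 0 ≤ x → (P {ω | γf i ω ≤ x}).toReal = 1 - Real.exp (-(x / sf i)))
    (hge : ∀ i, ∀ x : ℝ, 0 ≤ x → (P {ω | γg i ω ≤ x}).toReal = 1 - Real.exp (-(x / sg i)))
    (r : Ω → Fin N) (hr : Measurable r)
    (hmax : ∀ᵐ ω ∂P, ∀ i, i ≠ r ω →
      min (γf i ω) (γg i ω) < min (γf (r ω) ω) (γg (r ω) ω)) :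
    ∀ γ : ℝ, 0 ≤ γ →
      (P {ω | γf (r ω) ω ≤ γ}).toReal =
        (∏ i, (1 - Real.exp (-((1 / sf i + 1 / sg i) * γ))))
        - ∑ j, (1 / sg j) * Real.exp (-(γ / sf j)) *
            ∫ β in (0:ℝ)..γ, Real.exp (-(β / sg j)) *
              ∏ i ∈ Finset.univ.erase j, (1 - Real.exp (-((1 / sf i + 1 / sg i) * β))) := by
  classical
  intro γ hγ
  -- basic CDF facts in `c * x` form
  have hfc : ∀ i, ∀ x, 0 ≤ x →
      (P {ω | γf i ω ≤ x}).toReal = 1 - Real.exp (-((sf i)⁻¹ * x)) := by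
    intro i x hx; rw [hfe i x hx, inv_mul_eq_div]
  have hgc : ∀ i, ∀ x, 0 ≤ x →
      (P {ω | γg i ω ≤ x}).toReal = 1 - Real.exp (-((sg i)⁻¹ * x)) := by
    intro i x hx; rw [hge i x hx, inv_mul_eq_div]
  have hlampos : ∀ i, 0 < 1 / sf i + 1 / sg i := by
    intro i
    have h1 := hsf i; have h2 := hsg i
    positivity
  have hpairind : ∀ i, IndepFun (γf i) (γg i) P := by
    intro i
    exact hind.indepFun (by simp : (Sum.inl i : Fin N ⊕ Fin N) ≠ Sum.inr i)
  -- survival functions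
  have hsurvf : ∀ i, ∀ x, 0 ≤ x →
      P {ω | x < γf i ω} = ENNReal.ofReal (Real.exp (-((sf i)⁻¹ * x))) :=
    fun i x hx => aux_surv P (hf i) (hfc i) hx
  have hsurvg : ∀ i, ∀ x, 0 ≤ x →
      P {ω | x < γg i ω} = ENNReal.ofReal (Real.exp (-((sg i)⁻¹ * x))) :=
    fun i x hx => aux_surv P (hg i) (hgc i) hx
  have hsurvM : ∀ i, ∀ x, 0 ≤ x →
      P {ω | x < min (γf i ω) (γg i ω)}
        = ENNReal.ofReal (Real.exp (-((1 / sf i + 1 / sg i) * x))) := by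
    intro i x hx
    have hset : {ω | x < min (γf i ω) (γg i ω)} = γf i ⁻¹' Ioi x ∩ γg i ⁻¹' Ioi x := by
      ext ω; simp [lt_min_iff, mem_preimage, mem_Ioi]
    rw [hset, (hpairind i).measure_inter_preimage_eq_mul _ _ measurableSet_Ioi measurableSet_Ioi]
    have h1 : P (γf i ⁻¹' Ioi x) = ENNReal.ofReal (Real.exp (-((sf i)⁻¹ * x))) := hsurvf i x hx
    have h2 : P (γg i ⁻¹' Ioi x) = ENNReal.ofReal (Real.exp (-((sg i)⁻¹ * x))) := hsurvg i x hx
    rw [h1, h2, ← ENNReal.ofReal_mul (exp_pos _).le, ← Real.exp_add]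
    congr 2
    field_simp
    ring
  have hMcdfE : ∀ i, ∀ x, 0 ≤ x →
      P {ω | min (γf i ω) (γg i ω) ≤ x}
        = ENNReal.ofReal (1 - Real.exp (-((1 / sf i + 1 / sg i) * x))) := by
    intro i x hx
    have hset : {ω | min (γf i ω) (γg i ω) ≤ x} = {ω | x < min (γf i ω) (γg i ω)}ᶜ := by
      ext ω; simp only [mem_setOf_eq, mem_compl_iff, not_lt]
    rw [hset]
    refine aux_compl' P (((hf i).min (hg i)) measurableSet_Ioi) (exp_pos _).le
      (Real.exp_le_one_iff.mpr ?_) (hsurvM i x hx)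
    have := mul_nonneg (hlampos i).le hx
    linarith
  have hMcdfR : ∀ i, ∀ x, 0 ≤ x →
      (P {ω | min (γf i ω) (γg i ω) ≤ x}).toReal
        = 1 - Real.exp (-((1 / sf i + 1 / sg i) * x)) := by
    intro i x hx
    rw [hMcdfE i x hx, ENNReal.toReal_ofReal]
    have : Real.exp (-((1 / sf i + 1 / sg i) * x)) ≤ 1 :=
      Real.exp_le_one_iff.mpr (by nlinarith [mul_nonneg (hlampos i).le hx])
    linarith
  have hMatom : ∀ i, ∀ t : ℝ, P {ω | min (γf i ω) (γg i ω) = t} = 0 := fun i t =>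
    aux_atom P ((hf i).min (hg i)) (fun ω => le_min (hfpos i ω) (hgpos i ω)) (hMcdfR i) t
  have hMIio : ∀ i, ∀ u : ℝ,
      P ((fun ω => min (γf i ω) (γg i ω)) ⁻¹' Iio u)
        = ENNReal.ofReal (1 - Real.exp (-((1 / sf i + 1 / sg i) * u))) := by
    intro i u
    by_cases hu : 0 < u
    · have hunion : {ω | min (γf i ω) (γg i ω) ≤ u}
          = (fun ω => min (γf i ω) (γg i ω)) ⁻¹' Iio u ∪ {ω | min (γf i ω) (γg i ω) = u} := by
        ext ω; simp only [mem_setOf_eq, mem_union, mem_preimage, mem_Iio]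
        exact le_iff_lt_or_eq
      have hdisj : Disjoint ((fun ω => min (γf i ω) (γg i ω)) ⁻¹' Iio u)
          {ω | min (γf i ω) (γg i ω) = u} := by
        rw [Set.disjoint_left]
        intro ω h1 h2
        simp only [mem_preimage, mem_Iio] at h1
        simp only [mem_setOf_eq] at h2
        exact absurd h2 (ne_of_lt h1)
      have hatomm : MeasurableSet {ω | min (γf i ω) (γg i ω) = u} :=
        ((hf i).min (hg i)) (measurableSet_singleton u)
      calc P ((fun ω => min (γf i ω) (γg i ω)) ⁻¹' Iio u)
          = P ((fun ω => min (γf i ω) (γg i ω)) ⁻¹' Iio u)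
            + P {ω | min (γf i ω) (γg i ω) = u} := by rw [hMatom i u, add_zero]
        _ = P {ω | min (γf i ω) (γg i ω) ≤ u} := by
            rw [hunion, measure_union hdisj hatomm]
        _ = ENNReal.ofReal (1 - Real.exp (-((1 / sf i + 1 / sg i) * u))) := hMcdfE i u hu.le
    · push_neg at hu
      have hempty : (fun ω => min (γf i ω) (γg i ω)) ⁻¹' Iio u ⊆ (∅ : Set Ω) := by
        intro ω hω
        simp only [mem_preimage, mem_Iio] at hω
        have := le_min (hfpos i ω) (hgpos i ω)
        linarith
      have h0 : P ((fun ω => min (γf i ω) (γg i ω)) ⁻¹' Iio u) = 0 :=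
        measure_mono_null hempty (by simp)
      rw [h0]
      symm
      rw [ENNReal.ofReal_eq_zero]
      have h1 : 0 ≤ -((1 / sf i + 1 / sg i) * u) := by nlinarith [(hlampos i).le]
      linarith [Real.one_le_exp h1]
  -- the events
  set A : Fin N → Set Ω := fun j =>
    {ω | ∀ i, i ≠ j → min (γf i ω) (γg i ω) < min (γf j ω) (γg j ω)} with hA_def
  set Bs : Fin N → Set Ω := fun j => {ω | γf j ω ≤ γ} ∩ A j with hBs_def
  set Cs : Fin N → Set Ω := fun j => {ω | min (γf j ω) (γg j ω) ≤ γ} ∩ A j with hCs_def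
  set E : Fin N → Set Ω := fun j =>
    {ω | γg j ω ≤ γ ∧ ∀ i, i ≠ j → min (γf i ω) (γg i ω) < γg j ω} with hE_def
  set Ds : Fin N → Set Ω := fun j => {ω | γ < γf j ω} ∩ E j with hDs_def
  have hAm : ∀ j, MeasurableSet (A j) := by
    intro j
    have : A j = ⋂ i, ⋂ (_ : i ≠ j),
        {ω | min (γf i ω) (γg i ω) < min (γf j ω) (γg j ω)} := by
      rw [hA_def]; ext ω; simp
    rw [this]
    exact MeasurableSet.iInter fun i => MeasurableSet.iInter fun _ =>
      measurableSet_lt ((hf i).min (hg i)) ((hf j).min (hg j))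
  have hBm : ∀ j, MeasurableSet (Bs j) := by
    intro j
    exact ((hf j) measurableSet_Iic).inter (hAm j)
  have hCm : ∀ j, MeasurableSet (Cs j) := by
    intro j
    exact (((hf j).min (hg j)) measurableSet_Iic).inter (hAm j)
  have hEm : ∀ j, MeasurableSet (E j) := by
    intro j
    have : E j = {ω | γg j ω ≤ γ} ∩ ⋂ i, ⋂ (_ : i ≠ j),
        {ω | min (γf i ω) (γg i ω) < γg j ω} := by
      rw [hE_def]; ext ω; simp [and_assoc]
    rw [this]
    exact ((hg j) measurableSet_Iic).inter
      (MeasurableSet.iInter fun i => MeasurableSet.iInter fun _ =>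
        measurableSet_lt ((hf i).min (hg i)) (hg j))
  have hDm : ∀ j, MeasurableSet (Ds j) := by
    intro j
    exact ((hf j) measurableSet_Ioi).inter (hEm j)
  -- decomposition facts
  have hBCD : ∀ j, Bs j = Cs j \ Ds j := by
    intro j
    rw [hBs_def, hCs_def, hDs_def, hE_def]
    ext ω
    simp only [mem_diff, mem_inter_iff, mem_setOf_eq]
    constructor
    · rintro ⟨hfγ, hA⟩
      refine ⟨⟨le_trans (min_le_left _ _) hfγ, hA⟩, ?_⟩
      rintro ⟨hlt, _, _⟩
      exact absurd hfγ (not_le.mpr hlt)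
    · rintro ⟨⟨hMγ, hA⟩, hnD⟩
      refine ⟨?_, hA⟩
      by_contra hfγ
      push_neg at hfγ
      have hgj : γg j ω ≤ γ := by
        rcases min_le_iff.mp hMγ with h | h
        · exact absurd hfγ (not_lt.mpr h)
        · exact h
      have hMeq : min (γf j ω) (γg j ω) = γg j ω :=
        min_eq_right (le_of_lt (lt_of_le_of_lt hgj hfγ))
      exact hnD ⟨hfγ, hgj, fun i hi => lt_of_lt_of_eq (hA i hi) hMeq⟩
  have hDsubC : ∀ j, Ds j ⊆ Cs j := by
    intro j ω hω
    rw [hDs_def, hE_def] at hω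
    obtain ⟨hlt, hgj, hall⟩ := hω
    have hMeq : min (γf j ω) (γg j ω) = γg j ω :=
      min_eq_right (le_of_lt (lt_of_le_of_lt hgj hlt))
    rw [hCs_def, hA_def]
    exact ⟨le_trans (min_le_right _ _) hgj, fun i hi => lt_of_lt_of_eq (hall i hi) hMeq.symm⟩
  have hBdisj : Pairwise (Function.onFun Disjoint Bs) := by
    intro j k hjk
    rw [Function.onFun, Set.disjoint_left]
    intro ω h1 h2
    rw [hBs_def] at h1 h2
    exact lt_asymm (h1.2 k hjk.symm) (h2.2 j hjk)
  have hCdisj : Pairwise (Function.onFun Disjoint Cs) := by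
    intro j k hjk
    rw [Function.onFun, Set.disjoint_left]
    intro ω h1 h2
    rw [hCs_def] at h1 h2
    exact lt_asymm (h1.2 k hjk.symm) (h2.2 j hjk)
  -- a.e. identifications
  have hUB : {ω | γf (r ω) ω ≤ γ} =ᵐ[P] ⋃ j, Bs j := by
    rw [Filter.eventuallyEq_set]
    filter_upwards [hmax] with ω hω
    constructor
    · intro h
      exact mem_iUnion.mpr ⟨r ω, h, hω⟩
    · intro h
      rcases mem_iUnion.mp h with ⟨j, hfj, hAj⟩
      have hjr : j = r ω := by
        by_contra hne
        exact lt_asymm (hω j hne) (hAj (r ω) (fun hh => hne hh.symm))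
      rw [← hjr]
      exact hfj
  have hUC : (⋃ j, Cs j) =ᵐ[P] ⋂ i, {ω | min (γf i ω) (γg i ω) ≤ γ} := by
    rw [Filter.eventuallyEq_set]
    filter_upwards [hmax] with ω hω
    constructor
    · intro h
      rcases mem_iUnion.mp h with ⟨j, hMj, hAj⟩
      refine mem_iInter.mpr fun i => ?_
      by_cases hij : i = j
      · rw [hij]; exact hMj
      · exact le_trans (le_of_lt (hAj i hij)) hMj
    · intro h
      refine mem_iUnion.mpr ⟨r ω, mem_iInter.mp h (r ω), hω⟩
  -- sum over Cs
  have hsumC : ∑ j, (P (Cs j)).toReal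
      = ∏ i, (1 - Real.exp (-((1 / sf i + 1 / sg i) * γ))) := by
    have h1 : (∑ j, P (Cs j)) = P (⋃ j, Cs j) := by
      rw [measure_iUnion hCdisj hCm, tsum_fintype]
    have h2 : P (⋃ j, Cs j) = P (⋂ i, {ω | min (γf i ω) (γg i ω) ≤ γ}) := measure_congr hUC
    have hset : (⋂ i, {ω | min (γf i ω) (γg i ω) ≤ γ})
        = ⋂ i ∈ Finset.univ, (fun ω => min (γf i ω) (γg i ω)) ⁻¹' Iic γ := by
      ext ω; simp
    have h3 := aux_indM P γf γg hf hg hind Finset.univ (fun _ => Iic γ)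
      (fun _ => measurableSet_Iic)
    have h4 : ∀ i, P ((fun ω => min (γf i ω) (γg i ω)) ⁻¹' Iic γ)
        = ENNReal.ofReal (1 - Real.exp (-((1 / sf i + 1 / sg i) * γ))) := by
      intro i
      exact hMcdfE i γ hγ
    calc ∑ j, (P (Cs j)).toReal = (∑ j, P (Cs j)).toReal :=
          (ENNReal.toReal_sum (fun _ _ => measure_ne_top P _)).symm
      _ = (P (⋂ i, {ω | min (γf i ω) (γg i ω) ≤ γ})).toReal := by rw [h1, h2]
      _ = (∏ i, P ((fun ω => min (γf i ω) (γg i ω)) ⁻¹' Iic γ)).toReal := by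
          rw [hset, h3]
      _ = ∏ i, (1 - Real.exp (-((1 / sf i + 1 / sg i) * γ))) := by
          rw [ENNReal.toReal_prod]
          refine Finset.prod_congr rfl fun i _ => ?_
          rw [h4 i, ENNReal.toReal_ofReal]
          have : Real.exp (-((1 / sf i + 1 / sg i) * γ)) ≤ 1 :=
            Real.exp_le_one_iff.mpr (by nlinarith [mul_nonneg (hlampos i).le hγ])
          linarith
  -- value of the D terms
  have hDval : ∀ j, (P (Ds j)).toReal
      = (1 / sg j) * Real.exp (-(γ / sf j)) *
          ∫ β in (0:ℝ)..γ, Real.exp (-(β / sg j)) *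
            ∏ i ∈ Finset.univ.erase j, (1 - Real.exp (-((1 / sf i + 1 / sg i) * β))) := by
    intro j
    -- factor off the `γf j` part
    have hmem_inrj : Sum.inr j ∈ (Finset.univ.erase (Sum.inl j) : Finset (Fin N ⊕ Fin N)) := by
      simp
    have hmem_inl : ∀ i : Fin N, i ≠ j →
        Sum.inl i ∈ (Finset.univ.erase (Sum.inl j) : Finset (Fin N ⊕ Fin N)) := by
      intro i hi; simp [hi]
    have hmem_inr : ∀ i : Fin N,
        Sum.inr i ∈ (Finset.univ.erase (Sum.inl j) : Finset (Fin N ⊕ Fin N)) := by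
      intro i; simp
    set C : Set (∀ _ : (Finset.univ.erase (Sum.inl j) : Finset (Fin N ⊕ Fin N)), ℝ) :=
      {v | v ⟨Sum.inr j, hmem_inrj⟩ ≤ γ ∧ ∀ i : Fin N, ∀ h : i ≠ j,
        min (v ⟨Sum.inl i, hmem_inl i h⟩) (v ⟨Sum.inr i, hmem_inr i⟩)
          < v ⟨Sum.inr j, hmem_inrj⟩} with hC_def
    have hCmeas : MeasurableSet C := by
      have : C = {v : ∀ _ : (Finset.univ.erase (Sum.inl j) : Finset (Fin N ⊕ Fin N)), ℝ |
            v ⟨Sum.inr j, hmem_inrj⟩ ≤ γ}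
          ∩ ⋂ i : Fin N, ⋂ h : i ≠ j,
            {v | min (v ⟨Sum.inl i, hmem_inl i h⟩) (v ⟨Sum.inr i, hmem_inr i⟩)
              < v ⟨Sum.inr j, hmem_inrj⟩} := by
        rw [hC_def]; ext v; simp [mem_iInter]
      rw [this]
      refine (measurableSet_le (measurable_pi_apply _) measurable_const).inter ?_
      exact MeasurableSet.iInter fun i => MeasurableSet.iInter fun h =>
        measurableSet_lt ((measurable_pi_apply (⟨Sum.inl i, hmem_inl i h⟩ : (Finset.univ.erase (Sum.inl j) : Finset (Fin N ⊕ Fin N)))).min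
          (measurable_pi_apply (⟨Sum.inr i, hmem_inr i⟩ : (Finset.univ.erase (Sum.inl j) : Finset (Fin N ⊕ Fin N))))) (measurable_pi_apply _)
    have hID := aux_indD P γf γg hf hg hind j
    have hEeq : E j = (fun ω (k : (Finset.univ.erase (Sum.inl j) : Finset (Fin N ⊕ Fin N))) =>
        Sum.elim γf γg k.1 ω) ⁻¹' C := rfl
    have key := hID.measure_inter_preimage_eq_mul (Ioi γ) C measurableSet_Ioi hCmeas
    have hDeq : Ds j = γf j ⁻¹' Ioi γ
        ∩ (fun ω (k : (Finset.univ.erase (Sum.inl j) : Finset (Fin N ⊕ Fin N))) =>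
            Sum.elim γf γg k.1 ω) ⁻¹' C := rfl
    have hPD : P (Ds j) = ENNReal.ofReal (Real.exp (-((sf j)⁻¹ * γ))) * P (E j) := by
      rw [hDeq, key, ← hEeq]
      congr 1
      exact hsurvf j γ hγ
    -- compute `P (E j)` by Fubini
    set V : Ω → ({x : Fin N // x ∈ (Finset.univ.erase j : Finset (Fin N))} → ℝ) :=
      fun ω i => min (γf i.1 ω) (γg i.1 ω) with hV_def
    have hVm : Measurable V :=
      measurable_pi_lambda _ fun i => (hf i.1).min (hg i.1)
    have hIQ : IndepFun (γg j) V P := aux_indQ P γf γg hf hg hind j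
    set TT : Set (ℝ × ({x : Fin N // x ∈ (Finset.univ.erase j : Finset (Fin N))} → ℝ)) :=
      {p | p.1 ≤ γ ∧ ∀ i, p.2 i < p.1} with hTT_def
    have hTTm : MeasurableSet TT := by
      have : TT = {p : ℝ × ({x : Fin N // x ∈ (Finset.univ.erase j : Finset (Fin N))} → ℝ) | p.1 ≤ γ}
          ∩ ⋂ i, {p : ℝ × ({x : Fin N // x ∈ (Finset.univ.erase j : Finset (Fin N))} → ℝ) | p.2 i < p.1} := by
        rw [hTT_def]; ext p; simp [mem_iInter]
      rw [this]
      refine (measurableSet_le measurable_fst measurable_const).inter ?_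
      refine MeasurableSet.iInter fun i => ?_
      have hm2 : Measurable fun p : ℝ × ({x : Fin N // x ∈ (Finset.univ.erase j : Finset (Fin N))} → ℝ) => p.2 i :=
        (measurable_pi_apply i).comp measurable_snd
      exact measurableSet_lt hm2 measurable_fst
    have hET : E j = (fun ω => (γg j ω, V ω)) ⁻¹' TT := by
      rw [hE_def, hTT_def, hV_def]
      ext ω
      simp only [mem_preimage, mem_setOf_eq]
      constructor
      · rintro ⟨h1, h2⟩
        exact ⟨h1, fun i => h2 i.1 (Finset.mem_erase.mp i.2).1⟩
      · rintro ⟨h1, h2⟩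
        exact ⟨h1, fun i hi => h2 ⟨i, Finset.mem_erase.mpr ⟨hi, Finset.mem_univ i⟩⟩⟩
    have hprobV : IsProbabilityMeasure (P.map V) := Measure.isProbabilityMeasure_map hVm.aemeasurable
    have hprobg : IsProbabilityMeasure (P.map (γg j)) :=
      Measure.isProbabilityMeasure_map (hg j).aemeasurable
    have hmapprod : P.map (fun ω => (γg j ω, V ω)) = (P.map (γg j)).prod (P.map V) :=
      (indepFun_iff_map_prod_eq_prod_map_map (hg j).aemeasurable hVm.aemeasurable).mp hIQ
    have hslice : ∀ u : ℝ, (P.map V) (Prod.mk u ⁻¹' TT)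
        = Set.indicator (Iic γ) (fun u => ∏ i ∈ Finset.univ.erase j,
            ENNReal.ofReal (1 - Real.exp (-((1 / sf i + 1 / sg i) * u)))) u := by
      intro u
      by_cases hu : u ≤ γ
      · rw [Set.indicator_of_mem (mem_Iic.mpr hu)]
        have hsl : Prod.mk u ⁻¹' TT
            = Set.pi Set.univ (fun _ : {x : Fin N // x ∈ (Finset.univ.erase j : Finset (Fin N))} => Iio u) := by
          ext v; simp [hTT_def, hu, Set.mem_pi]
        rw [hsl, Measure.map_apply hVm (MeasurableSet.univ_pi fun _ => measurableSet_Iio)]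
        have hpre : V ⁻¹' (Set.pi Set.univ
              (fun _ : {x : Fin N // x ∈ (Finset.univ.erase j : Finset (Fin N))} => Iio u))
            = ⋂ i ∈ Finset.univ.erase j, (fun ω => min (γf i ω) (γg i ω)) ⁻¹' Iio u := by
          ext ω
          simp only [hV_def, mem_preimage, Set.mem_pi, Set.mem_univ, forall_true_left,
            mem_iInter, mem_Iio]
          constructor
          · intro h i hi; exact h ⟨i, hi⟩
          · intro h i; exact h i.1 i.2
        rw [hpre, aux_indM P γf γg hf hg hind (Finset.univ.erase j) (fun _ => Iio u)
          (fun _ => measurableSet_Iio)]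
        exact Finset.prod_congr rfl fun i _ => hMIio i u
      · rw [Set.indicator_of_notMem (by simpa using hu)]
        have : Prod.mk u ⁻¹' TT = (∅ : Set ({x : Fin N // x ∈ (Finset.univ.erase j : Finset (Fin N))} → ℝ)) := by
          ext v; simp [hTT_def, hu]
        rw [this]; simp
    have hQ3 : P (E j) = ∫⁻ u in Iic γ, (∏ i ∈ Finset.univ.erase j,
        ENNReal.ofReal (1 - Real.exp (-((1 / sf i + 1 / sg i) * u)))) ∂(P.map (γg j)) := by
      rw [hET, ← Measure.map_apply ((hg j).prodMk hVm) hTTm, hmapprod,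
        Measure.prod_apply hTTm]
      rw [lintegral_congr hslice, lintegral_indicator measurableSet_Iic]
    -- move to Lebesgue measure with exponential density
    have hgmap : P.map (γg j) = expMeasure (sg j)⁻¹ :=
      aux_map P (hg j) (inv_pos.mpr (hsg j)) (hgpos j) (hgc j)
    have hgm : Measurable (fun u => ∏ i ∈ Finset.univ.erase j,
        ENNReal.ofReal (1 - Real.exp (-((1 / sf i + 1 / sg i) * u)))) := by
      refine Finset.measurable_prod _ fun i _ => Measurable.ennreal_ofReal ?_
      exact (continuous_const.sub
        (Real.continuous_exp.comp ((continuous_const.mul continuous_id).neg))).measurable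
    have hQ4 : P (E j) = ∫⁻ u in Iic γ, exponentialPDF (sg j)⁻¹ u * ∏ i ∈ Finset.univ.erase j,
          ENNReal.ofReal (1 - Real.exp (-((1 / sf i + 1 / sg i) * u))) := by
      rw [hQ3, hgmap, expMeasure_eq_withDensity,
        restrict_withDensity measurableSet_Iic,
        lintegral_withDensity_eq_lintegral_mul _ (measurable_exponentialPDF _) hgm]
      rfl
    have hsplit : (∫⁻ u in Iic γ, exponentialPDF (sg j)⁻¹ u * ∏ i ∈ Finset.univ.erase j,
          ENNReal.ofReal (1 - Real.exp (-((1 / sf i + 1 / sg i) * u))))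
        = ∫⁻ u in Ioc 0 γ, exponentialPDF (sg j)⁻¹ u * ∏ i ∈ Finset.univ.erase j,
          ENNReal.ofReal (1 - Real.exp (-((1 / sf i + 1 / sg i) * u))) := by
      have hun : Iic γ = Iic 0 ∪ Ioc 0 γ := (Iic_union_Ioc_eq_Iic hγ).symm
      rw [hun, lintegral_union measurableSet_Ioc (Iic_disjoint_Ioc le_rfl)]
      have hzero : (∫⁻ u in Iic 0, exponentialPDF (sg j)⁻¹ u * ∏ i ∈ Finset.univ.erase j,
          ENNReal.ofReal (1 - Real.exp (-((1 / sf i + 1 / sg i) * u)))) = 0 := by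
        rw [← Measure.restrict_congr_set Iio_ae_eq_Iic,
          setLIntegral_congr_fun measurableSet_Iio
            (fun u (hu : u < 0) => by
              rw [exponentialPDF_of_neg hu, zero_mul]),
          lintegral_zero]
      rw [hzero, zero_add]
    have hioc : (∫⁻ u in Ioc 0 γ, exponentialPDF (sg j)⁻¹ u * ∏ i ∈ Finset.univ.erase j,
          ENNReal.ofReal (1 - Real.exp (-((1 / sf i + 1 / sg i) * u))))
        = ∫⁻ u in Ioc 0 γ, ENNReal.ofReal ((sg j)⁻¹ * Real.exp (-((sg j)⁻¹ * u)) *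
            ∏ i ∈ Finset.univ.erase j, (1 - Real.exp (-((1 / sf i + 1 / sg i) * u)))) := by
      refine setLIntegral_congr_fun measurableSet_Ioc (fun u hu => ?_)
      have hnn1 : ∀ i ∈ Finset.univ.erase j, 0 ≤ 1 - Real.exp (-((1 / sf i + 1 / sg i) * u)) := by
        intro i _
        have h1 := (hlampos i).le
        have h2 := hu.1.le
        have h3 : Real.exp (-((1 / sf i + 1 / sg i) * u)) ≤ 1 :=
          Real.exp_le_one_iff.mpr (by nlinarith)
        linarith
      have hnn2 : (0:ℝ) ≤ (sg j)⁻¹ * Real.exp (-((sg j)⁻¹ * u)) := by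
        have := hsg j; positivity
      rw [exponentialPDF_of_nonneg hu.1.le, ← ENNReal.ofReal_prod_of_nonneg hnn1,
        ← ENNReal.ofReal_mul hnn2]
    -- convert to a real interval integral
    have hnn : ∀ u ∈ Ioc (0:ℝ) γ, 0 ≤ (sg j)⁻¹ * Real.exp (-((sg j)⁻¹ * u)) *
        ∏ i ∈ Finset.univ.erase j, (1 - Real.exp (-((1 / sf i + 1 / sg i) * u))) := by
      intro u hu
      have hprod : 0 ≤ ∏ i ∈ Finset.univ.erase j,
          (1 - Real.exp (-((1 / sf i + 1 / sg i) * u))) := by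
        refine Finset.prod_nonneg fun i _ => ?_
        have h1 := (hlampos i).le
        have h2 := hu.1.le
        have : Real.exp (-((1 / sf i + 1 / sg i) * u)) ≤ 1 :=
          Real.exp_le_one_iff.mpr (by nlinarith)
        linarith
      have := (hsg j)
      positivity
    have hcontI : Continuous fun u : ℝ => (sg j)⁻¹ * Real.exp (-((sg j)⁻¹ * u)) *
        ∏ i ∈ Finset.univ.erase j, (1 - Real.exp (-((1 / sf i + 1 / sg i) * u))) := by
      refine Continuous.mul (Continuous.mul continuous_const ?_) ?_
      · exact Real.continuous_exp.comp ((continuous_const.mul continuous_id).neg)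
      · exact continuous_finset_prod _ fun i _ => continuous_const.sub
          (Real.continuous_exp.comp ((continuous_const.mul continuous_id).neg))
    have hreal : (∫⁻ u in Ioc 0 γ, ENNReal.ofReal ((sg j)⁻¹ * Real.exp (-((sg j)⁻¹ * u)) *
            ∏ i ∈ Finset.univ.erase j,
              (1 - Real.exp (-((1 / sf i + 1 / sg i) * u))))).toReal
        = ∫ u in Ioc (0:ℝ) γ, (sg j)⁻¹ * Real.exp (-((sg j)⁻¹ * u)) *
            ∏ i ∈ Finset.univ.erase j, (1 - Real.exp (-((1 / sf i + 1 / sg i) * u))) := by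
      rw [integral_eq_lintegral_of_nonneg_ae
        ((ae_restrict_iff' measurableSet_Ioc).mpr (ae_of_all _ hnn))
        hcontI.aestronglyMeasurable]
    have hintval : ∫ u in Ioc (0:ℝ) γ, (sg j)⁻¹ * Real.exp (-((sg j)⁻¹ * u)) *
            ∏ i ∈ Finset.univ.erase j, (1 - Real.exp (-((1 / sf i + 1 / sg i) * u)))
        = (1 / sg j) * ∫ β in (0:ℝ)..γ, Real.exp (-(β / sg j)) *
            ∏ i ∈ Finset.univ.erase j, (1 - Real.exp (-((1 / sf i + 1 / sg i) * β))) := by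
      rw [← intervalIntegral.integral_of_le hγ, ← intervalIntegral.integral_const_mul]
      refine intervalIntegral.integral_congr fun u _ => ?_
      have h1 : (sg j)⁻¹ * u = u / sg j := inv_mul_eq_div _ _
      rw [h1, one_div]
      ring
    -- assemble
    rw [hPD, ENNReal.toReal_mul, ENNReal.toReal_ofReal (exp_pos _).le, hQ4, hsplit, hioc,
      hreal, hintval, inv_mul_eq_div]
    ring
  -- main computation
  have hPB : (P {ω | γf (r ω) ω ≤ γ}).toReal = ∑ j, (P (Bs j)).toReal := by
    rw [measure_congr hUB, measure_iUnion hBdisj hBm, tsum_fintype,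
      ENNReal.toReal_sum (fun _ _ => measure_ne_top P _)]
  have hPBj : ∀ j, (P (Bs j)).toReal = (P (Cs j)).toReal - (P (Ds j)).toReal := by
    intro j
    rw [hBCD j, measure_diff (hDsubC j) (hDm j).nullMeasurableSet (measure_ne_top P _),
      ENNReal.toReal_sub_of_le (measure_mono (hDsubC j)) (measure_ne_top P _)]
  rw [hPB]
  calc ∑ j, (P (Bs j)).toReal
      = ∑ j, ((P (Cs j)).toReal - (P (Ds j)).toReal) :=
        Finset.sum_congr rfl fun j _ => hPBj j
    _ = (∑ j, (P (Cs j)).toReal) - ∑ j, (P (Ds j)).toReal := Finset.sum_sub_distrib _ _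
    _ = (∏ i, (1 - Real.exp (-((1 / sf i + 1 / sg i) * γ))))
        - ∑ j, (1 / sg j) * Real.exp (-(γ / sf j)) *
            ∫ β in (0:ℝ)..γ, Real.exp (-(β / sg j)) *
              ∏ i ∈ Finset.univ.erase j, (1 - Real.exp (-((1 / sf i + 1 / sg i) * β))) := by
        rw [hsumC]
        congr 1
        exact Finset.sum_congr rfl fun j _ => hDval j
end

section
/- Under the hypotheses of the selection CDF (Proposition 1 of the paper), for any j ∈ {1,…,N} and γ ≥ 0: P((m_j ≤ γ) ∩ (∩_{i≠j} {m_i < m_j}) ∩ {γ_{f_j} > γ}) = e^{−γ/σ_{f_j}²} · (1/σ_{g_j}²) ∫_0^γ e^{−β/σ_{g_j}²} ∏_{i≠j}(1 − e^{−(1/σ_{f_i}²+1/σ_{g_i}²)β}) dβ, where m_i = min{γ_{f_i}, γ_{g_i}}. -/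
open MeasureTheory ProbabilityTheory Real
section helpers
open Set


lemma expMeasure_apply (r : ℝ) {t : Set ℝ} (ht : MeasurableSet t) :
    expMeasure r t = ∫⁻ y in t, exponentialPDF r y := by
  rw [expMeasure, gammaMeasure, withDensity_apply _ ht]; rfl

lemma expMeasure_singleton (r y : ℝ) : expMeasure r {y} = 0 := by
  rw [expMeasure_apply r (measurableSet_singleton y),
    Measure.restrict_eq_zero.mpr (measure_singleton y), lintegral_zero_measure]

lemma expMeasure_Iic {r : ℝ} (hr : 0 < r) {y : ℝ} (hy : 0 ≤ y) :
    expMeasure r (Iic y) = ENNReal.ofReal (1 - Real.exp (-(r * y))) := by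
  rw [expMeasure_apply r measurableSet_Iic, lintegral_exponentialPDF_eq_antiDeriv hr, if_pos hy]

lemma expMeasure_Iic_neg {r : ℝ} (hr : 0 < r) {y : ℝ} (hy : y < 0) :
    expMeasure r (Iic y) = 0 := by
  rw [expMeasure_apply r measurableSet_Iic, lintegral_exponentialPDF_eq_antiDeriv hr,
    if_neg (not_le.2 hy), ENNReal.ofReal_zero]

lemma expMeasure_Ioi {r : ℝ} (hr : 0 < r) {y : ℝ} (hy : 0 ≤ y) :
    expMeasure r (Ioi y) = ENNReal.ofReal (Real.exp (-(r * y))) := by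
  have := isProbabilityMeasure_expMeasure hr
  have h1 : expMeasure r (Ioi y) = 1 - expMeasure r (Iic y) := by
    rw [← Set.compl_Iic, prob_compl_eq_one_sub measurableSet_Iic]
  rw [h1, expMeasure_Iic hr hy, ← ENNReal.ofReal_one, ← ENNReal.ofReal_sub _ (by
    have := Real.exp_le_one_iff.2 (by nlinarith : -(r*y) ≤ 0); linarith), sub_sub_cancel]

lemma expMeasure_Ici {r : ℝ} (hr : 0 < r) {y : ℝ} (hy : 0 ≤ y) :
    expMeasure r (Ici y) = ENNReal.ofReal (Real.exp (-(r * y))) := by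
  rw [← expMeasure_Ioi hr hy, ← Set.Ici_sdiff_left, measure_diff_null (expMeasure_singleton r y)]

lemma law_exp {Ω : Type*} [MeasurableSpace Ω] (P : Measure Ω) [IsProbabilityMeasure P]
    (X : Ω → ℝ) (hX : Measurable X) {s : ℝ} (hs : 0 < s)
    (hpos : ∀ ω, 0 ≤ X ω)
    (hcdf : ∀ x : ℝ, 0 ≤ x → (P {ω | X ω ≤ x}).toReal = 1 - Real.exp (-(x / s))) :
    P.map X = expMeasure (1 / s) := by
  have := isProbabilityMeasure_expMeasure (show (0:ℝ) < 1/s by positivity)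
  refine MeasureTheory.Measure.ext_of_Iic _ _ (fun a => ?_)
  rw [Measure.map_apply hX measurableSet_Iic]
  rcases le_or_gt 0 a with ha | ha
  · have h2 : P (X ⁻¹' Iic a) = ENNReal.ofReal (1 - Real.exp (-(a / s))) := by
      rw [← hcdf a ha, ENNReal.ofReal_toReal (measure_ne_top _ _)]; rfl
    rw [h2, expMeasure_Iic (by positivity) ha]
    congr 2
    field_simp
  · have h2 : X ⁻¹' Iic a = ∅ := by
      ext ω; simp only [Set.mem_preimage, Set.mem_Iic, Set.mem_empty_iff_false, iff_false, not_le]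
      exact lt_of_lt_of_le ha (hpos ω)
    rw [h2, measure_empty, expMeasure_Iic_neg (by positivity) ha]


section
variable {Ω : Type*} [MeasurableSpace Ω] (P : Measure Ω) [IsProbabilityMeasure P]
    {N : ℕ} (γf γg : Fin N → Ω → ℝ)
    (hf : ∀ i, Measurable (γf i)) (hg : ∀ i, Measurable (γg i))
    (hind : iIndepFun (Sum.elim γf γg) P)

include hf hg in
lemma meas_elim : ∀ k : Fin N ⊕ Fin N, Measurable (Sum.elim γf γg k) := by
  rintro (i | i)
  · exact hf i
  · exact hg i

include hind hf hg in
lemma min_event_indep (y : ℝ) (a : Fin N) (t : Finset (Fin N)) (ha : a ∉ t) :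
    P ({ω | min (γf a ω) (γg a ω) < y} ∩ ⋂ i ∈ (t : Set (Fin N)), {ω | min (γf i ω) (γg i ω) < y})
      = P {ω | min (γf a ω) (γg a ω) < y} *
        P (⋂ i ∈ (t : Set (Fin N)), {ω | min (γf i ω) (γg i ω) < y}) := by
  classical
  set S : Finset (Fin N ⊕ Fin N) := {Sum.inl a, Sum.inr a} with hS
  set T : Finset (Fin N ⊕ Fin N) := t.image Sum.inl ∪ t.image Sum.inr with hT
  have hdisj : Disjoint S T := by
    rw [Finset.disjoint_left]
    intro x hx hxT
    simp only [hS, Finset.mem_insert, Finset.mem_singleton] at hx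
    simp only [hT, Finset.mem_union, Finset.mem_image] at hxT
    rcases hx with rfl | rfl <;> rcases hxT with ⟨b, hb, h⟩ | ⟨b, hb, h⟩ <;>
      simp_all
  have hIndep := hind.indepFun_finset S T hdisj (meas_elim γf γg hf hg)
  have hmemS1 : (Sum.inl a : Fin N ⊕ Fin N) ∈ S := by simp [hS]
  have hmemS2 : (Sum.inr a : Fin N ⊕ Fin N) ∈ S := by simp [hS]
  refine hIndep.meas_inter ?_ ?_
  · refine ⟨{v : S → ℝ | min (v ⟨Sum.inl a, hmemS1⟩) (v ⟨Sum.inr a, hmemS2⟩) < y}, ?_, rfl⟩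
    exact measurableSet_lt (by fun_prop) measurable_const
  · refine ⟨⋂ (i : Fin N) (h : i ∈ t),
      {v : T → ℝ | min (v ⟨Sum.inl i, Finset.mem_union_left _ (Finset.mem_image_of_mem _ h)⟩)
        (v ⟨Sum.inr i, Finset.mem_union_right _ (Finset.mem_image_of_mem _ h)⟩) < y}, ?_, ?_⟩
    · exact MeasurableSet.iInter fun i => MeasurableSet.iInter fun h =>
        measurableSet_lt (by fun_prop) measurable_const
    · ext ω
      simp only [Set.mem_preimage, Set.mem_iInter, Set.mem_setOf_eq]
      rfl

include hind hf hg in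
lemma prod_min_event (y : ℝ) (t : Finset (Fin N)) :
    P (⋂ i ∈ (t : Set (Fin N)), {ω | min (γf i ω) (γg i ω) < y})
      = ∏ i ∈ t, P {ω | min (γf i ω) (γg i ω) < y} := by
  classical
  induction t using Finset.induction_on with
  | empty => simp
  | insert a t ha ih =>
    rw [Finset.coe_insert, Set.biInter_insert, min_event_indep P γf γg hf hg hind y a t ha, ih,
      Finset.prod_insert ha]
end

section
variable {Ω : Type*} [MeasurableSpace Ω] (P : Measure Ω) [IsProbabilityMeasure P]
    {N : ℕ} (γf γg : Fin N → Ω → ℝ)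
    (hf : ∀ i, Measurable (γf i)) (hg : ∀ i, Measurable (γg i))
    (sf sg : Fin N → ℝ) (hsf : ∀ i, 0 < sf i) (hsg : ∀ i, 0 < sg i)
    (hind : iIndepFun (Sum.elim γf γg) P)
    (hfpos : ∀ i ω, 0 ≤ γf i ω) (hgpos : ∀ i ω, 0 ≤ γg i ω)
    (hfe : ∀ i, ∀ x : ℝ, 0 ≤ x → (P {ω | γf i ω ≤ x}).toReal = 1 - Real.exp (-(x / sf i)))
    (hge : ∀ i, ∀ x : ℝ, 0 ≤ x → (P {ω | γg i ω ≤ x}).toReal = 1 - Real.exp (-(x / sg i)))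

include hf hsf hfpos hfe in
lemma lawf (i : Fin N) : P.map (γf i) = expMeasure (1 / sf i) :=
  law_exp P (γf i) (hf i) (hsf i) (hfpos i) (hfe i)

include hg hsg hgpos hge in
lemma lawg (i : Fin N) : P.map (γg i) = expMeasure (1 / sg i) :=
  law_exp P (γg i) (hg i) (hsg i) (hgpos i) (hge i)

include hf hsf hfpos hfe in
lemma survf (i : Fin N) {y : ℝ} (hy : 0 ≤ y) :
    P {ω | y ≤ γf i ω} = ENNReal.ofReal (Real.exp (-(1 / sf i * y))) := by
  have h : {ω | y ≤ γf i ω} = γf i ⁻¹' Ici y := rfl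
  rw [h, ← Measure.map_apply (hf i) measurableSet_Ici, lawf P γf hf sf hsf hfpos hfe i,
    expMeasure_Ici (by have := hsf i; positivity) hy]

include hg hsg hgpos hge in
lemma survg (i : Fin N) {y : ℝ} (hy : 0 ≤ y) :
    P {ω | y ≤ γg i ω} = ENNReal.ofReal (Real.exp (-(1 / sg i * y))) := by
  have h : {ω | y ≤ γg i ω} = γg i ⁻¹' Ici y := rfl
  rw [h, ← Measure.map_apply (hg i) measurableSet_Ici, lawg P γg hg sg hsg hgpos hge i,
    expMeasure_Ici (by have := hsg i; positivity) hy]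

include hf hg hsf hsg hind hfpos hgpos hfe hge in
lemma min_prob (i : Fin N) {y : ℝ} (hy : 0 ≤ y) :
    P {ω | min (γf i ω) (γg i ω) < y}
      = ENNReal.ofReal (1 - Real.exp (-((1 / sf i + 1 / sg i) * y))) := by
  have hset : {ω | min (γf i ω) (γg i ω) < y}
      = ({ω | y ≤ γf i ω} ∩ {ω | y ≤ γg i ω})ᶜ := by
    ext ω
    simp only [Set.mem_setOf_eq, Set.mem_compl_iff, Set.mem_inter_iff, not_and_or, not_le,
      min_lt_iff]
  have hFG : IndepFun (γf i) (γg i) P :=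
    hind.indepFun (show (Sum.inl i : Fin N ⊕ Fin N) ≠ Sum.inr i by simp)
  have hinter : P ({ω | y ≤ γf i ω} ∩ {ω | y ≤ γg i ω})
      = P {ω | y ≤ γf i ω} * P {ω | y ≤ γg i ω} :=
    hFG.meas_inter ⟨Ici y, measurableSet_Ici, rfl⟩ ⟨Ici y, measurableSet_Ici, rfl⟩
  have hmeas : MeasurableSet ({ω | y ≤ γf i ω} ∩ {ω | y ≤ γg i ω}) :=
    ((measurableSet_le measurable_const (hf i)).inter (measurableSet_le measurable_const (hg i)))
  have hexp : Real.exp (-(1 / sf i * y)) * Real.exp (-(1 / sg i * y))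
      = Real.exp (-((1 / sf i + 1 / sg i) * y)) := by
    rw [← Real.exp_add]; ring_nf
  rw [hset, prob_compl_eq_one_sub hmeas, hinter,
    survf P γf hf sf hsf hfpos hfe i hy, survg P γg hg sg hsg hgpos hge i hy,
    ← ENNReal.ofReal_mul (Real.exp_nonneg _), hexp, ← ENNReal.ofReal_one,
    ← ENNReal.ofReal_sub _ (Real.exp_nonneg _)]
end
end helpers
theorem selection_event_probability
    {Ω : Type*} [MeasurableSpace Ω] (P : Measure Ω) [IsProbabilityMeasure P]
    (N : ℕ) (hN : 1 ≤ N) (γf γg : Fin N → Ω → ℝ)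
    (hf : ∀ i, Measurable (γf i)) (hg : ∀ i, Measurable (γg i))
    (sf sg : Fin N → ℝ) (hsf : ∀ i, 0 < sf i) (hsg : ∀ i, 0 < sg i)
    (hind : iIndepFun (Sum.elim γf γg) P)
    (hfpos : ∀ i ω, 0 ≤ γf i ω) (hgpos : ∀ i ω, 0 ≤ γg i ω)
    (hfe : ∀ i, ∀ x : ℝ, 0 ≤ x → (P {ω | γf i ω ≤ x}).toReal = 1 - Real.exp (-(x / sf i)))
    (hge : ∀ i, ∀ x : ℝ, 0 ≤ x → (P {ω | γg i ω ≤ x}).toReal = 1 - Real.exp (-(x / sg i))) :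
    ∀ j : Fin N, ∀ γ : ℝ, 0 ≤ γ →
      (P {ω | min (γf j ω) (γg j ω) ≤ γ ∧
              (∀ i, i ≠ j → min (γf i ω) (γg i ω) < min (γf j ω) (γg j ω)) ∧
              γ < γf j ω}).toReal =
        Real.exp (-(γ / sf j)) * ((1 / sg j) *
          ∫ β in (0:ℝ)..γ, Real.exp (-(β / sg j)) *
            ∏ i ∈ Finset.univ.erase j, (1 - Real.exp (-((1 / sf i + 1 / sg i) * β)))) := by
  classical
  intro j γ hγ
  set κ : Finset (Fin N) := Finset.univ.erase j with hκ
  set rg : ℝ := 1 / sg j with hrg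
  have hrgpos : 0 < rg := by have := hsg j; positivity
  set Z : Ω → ({x // x ∈ κ} → ℝ) := fun ω i => min (γf i.1 ω) (γg i.1 ω) with hZdef
  have hZ : Measurable Z := measurable_pi_lambda _ fun i => (hf _).min (hg _)
  set G : ℝ → ℝ := fun y => ∏ i ∈ κ, (1 - Real.exp (-((1 / sf i + 1 / sg i) * y))) with hGdef
  have hGnonneg : ∀ y, 0 ≤ y → 0 ≤ G y := by
    intro y hy
    refine Finset.prod_nonneg fun i _ => ?_
    have : Real.exp (-((1 / sf i + 1 / sg i) * y)) ≤ 1 := by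
      rw [Real.exp_le_one_iff]
      have h1 := hsf i; have h2 := hsg i
      have : 0 ≤ (1 / sf i + 1 / sg i) * y := mul_nonneg (by positivity) hy
      linarith
    linarith
  -- the set B
  set B : Set (ℝ × ({x // x ∈ κ} → ℝ)) := {p | p.1 ≤ γ ∧ ∀ i, p.2 i < p.1} with hBdef
  have hB : MeasurableSet B := by
    have : B = {p : ℝ × ({x // x ∈ κ} → ℝ) | p.1 ≤ γ} ∩ ⋂ i, {p | p.2 i < p.1} := by
      ext p; simp [hBdef, Set.mem_iInter]
    rw [this]
    exact (measurableSet_le measurable_fst measurable_const).inter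
      (MeasurableSet.iInter fun i => measurableSet_lt (by fun_prop) measurable_fst)
  -- decompose the event
  have hE : {ω | min (γf j ω) (γg j ω) ≤ γ ∧
        (∀ i, i ≠ j → min (γf i ω) (γg i ω) < min (γf j ω) (γg j ω)) ∧ γ < γf j ω}
      = (γf j) ⁻¹' (Set.Ioi γ) ∩ (fun ω => (γg j ω, Z ω)) ⁻¹' B := by
    ext ω
    simp only [Set.mem_setOf_eq, Set.mem_inter_iff, Set.mem_preimage, Set.mem_Ioi, hBdef]
    constructor
    · rintro ⟨h1, h2, h3⟩
      have hgle : γg j ω ≤ γ := by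
        rcases min_le_iff.mp h1 with h | h
        · linarith
        · exact h
      have hmin : min (γf j ω) (γg j ω) = γg j ω := min_eq_right (by linarith)
      refine ⟨h3, hgle, fun i => ?_⟩
      have := h2 i.1 (Finset.mem_erase.mp i.2).1
      rw [hmin] at this
      exact this
    · rintro ⟨hx, hy, hz⟩
      have hmin : min (γf j ω) (γg j ω) = γg j ω := min_eq_right (by linarith)
      refine ⟨by rw [hmin]; exact hy, fun i hij => ?_, hx⟩
      rw [hmin]
      exact hz ⟨i, Finset.mem_erase.mpr ⟨hij, Finset.mem_univ i⟩⟩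
  -- independence of γf j from (γg j, Z)
  have hXYZ : IndepFun (γf j) (fun ω => (γg j ω, Z ω)) P := by
    have h := hind.indepFun_finset {Sum.inl j} ({Sum.inl j}ᶜ) disjoint_compl_right
      (meas_elim γf γg hf hg)
    have hφ : Measurable (fun v : ({x // x ∈ ({Sum.inl j} : Finset (Fin N ⊕ Fin N))} → ℝ) =>
        v ⟨Sum.inl j, Finset.mem_singleton_self _⟩) := measurable_pi_apply _
    have hψ : Measurable (fun v : ({x // x ∈ ({Sum.inl j} : Finset (Fin N ⊕ Fin N))ᶜ} → ℝ) =>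
        ((v ⟨Sum.inr j, by simp⟩,
          fun i : {x // x ∈ κ} => min (v ⟨Sum.inl i.1, by simpa using (Finset.mem_erase.mp i.2).1⟩)
            (v ⟨Sum.inr i.1, by simp⟩)) : ℝ × ({x // x ∈ κ} → ℝ))) := by fun_prop
    exact h.comp hφ hψ
  -- independence of γg j from Z
  have hYZ : IndepFun (γg j) Z P := by
    have h := hind.indepFun_finset {Sum.inr j} ({Sum.inr j}ᶜ) disjoint_compl_right
      (meas_elim γf γg hf hg)
    have hφ : Measurable (fun v : ({x // x ∈ ({Sum.inr j} : Finset (Fin N ⊕ Fin N))} → ℝ) =>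
        v ⟨Sum.inr j, Finset.mem_singleton_self _⟩) := measurable_pi_apply _
    have hψ : Measurable (fun v : ({x // x ∈ ({Sum.inr j} : Finset (Fin N ⊕ Fin N))ᶜ} → ℝ) =>
        (fun i : {x // x ∈ κ} => min (v ⟨Sum.inl i.1, by simp⟩)
            (v ⟨Sum.inr i.1, by simpa using (Finset.mem_erase.mp i.2).1⟩))) := by fun_prop
    exact h.comp hφ hψ
  -- split the probability
  have hsplit : P ((γf j) ⁻¹' (Set.Ioi γ) ∩ (fun ω => (γg j ω, Z ω)) ⁻¹' B)
      = P ((γf j) ⁻¹' (Set.Ioi γ)) * P ((fun ω => (γg j ω, Z ω)) ⁻¹' B) :=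
    hXYZ.meas_inter ⟨Set.Ioi γ, measurableSet_Ioi, rfl⟩ ⟨B, hB, rfl⟩
  -- first factor
  have hP1 : P ((γf j) ⁻¹' (Set.Ioi γ)) = ENNReal.ofReal (Real.exp (-(1 / sf j * γ))) := by
    rw [← Measure.map_apply (hf j) measurableSet_Ioi, lawf P γf hf sf hsf hfpos hfe j,
      expMeasure_Ioi (by have := hsf j; positivity) hγ]
  -- second factor
  haveI : IsProbabilityMeasure (P.map Z) := Measure.isProbabilityMeasure_map hZ.aemeasurable
  haveI : IsProbabilityMeasure (P.map (γg j)) := Measure.isProbabilityMeasure_map (hg j).aemeasurable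
  have hmap : P.map (fun ω => (γg j ω, Z ω)) = (P.map (γg j)).prod (P.map Z) :=
    (indepFun_iff_map_prod_eq_prod_map_map (hg j).aemeasurable hZ.aemeasurable).1 hYZ
  have hP2 : P ((fun ω => (γg j ω, Z ω)) ⁻¹' B)
      = ∫⁻ y in Set.Iic γ, P.map Z {z | ∀ i, z i < y} ∂(P.map (γg j)) := by
    rw [← Measure.map_apply ((hg j).prodMk hZ) hB, hmap, Measure.prod_apply hB]
    have hfe' : (fun y => (P.map Z) (Prod.mk y ⁻¹' B))
        = (Set.Iic γ).indicator (fun y => P.map Z {z | ∀ i, z i < y}) := by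
      funext y
      by_cases hy : y ≤ γ
      · rw [Set.indicator_of_mem (show y ∈ Set.Iic γ from hy)]
        congr 1
        ext z
        simp [hBdef, hy]
      · rw [Set.indicator_of_notMem (show y ∉ Set.Iic γ from hy)]
        have : Prod.mk y ⁻¹' B = ∅ := by
          ext z; simp [hBdef, hy]
        rw [this, measure_empty]
    rw [lintegral_congr fun y => congrFun hfe' y, lintegral_indicator measurableSet_Iic]
  -- identify law of γg j
  have hlawY : P.map (γg j) = expMeasure rg := lawg P γg hg sg hsg hgpos hge j
  -- restrict to Ioc 0 γ
  have hae : Set.Iic γ =ᵐ[expMeasure rg] Set.Ioc 0 γ := by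
    rw [MeasureTheory.ae_eq_set]
    constructor
    · have hsub : Set.Iic γ \ Set.Ioc 0 γ ⊆ Set.Iic (0:ℝ) := by
        rintro x ⟨hx1, hx2⟩
        simp only [Set.mem_Ioc, not_and, not_le] at hx2
        simp only [Set.mem_Iic] at hx1 ⊢
        by_contra hc
        push_neg at hc
        exact absurd (hx2 hc) (not_lt.mpr hx1)
      refine measure_mono_null hsub ?_
      rw [expMeasure_Iic hrgpos le_rfl]
      simp
    · have : Set.Ioc (0:ℝ) γ \ Set.Iic γ = ∅ := by
        ext x; simp only [Set.mem_diff, Set.mem_Ioc, Set.mem_Iic, Set.mem_empty_iff_false,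
          iff_false, not_and]
        tauto
      rw [this, measure_empty]
  -- slice value on Ioc 0 γ
  have hslice : ∀ y : ℝ, y ∈ Set.Ioc (0:ℝ) γ →
      (P.map Z) {z | ∀ i, z i < y} = ENNReal.ofReal (G y) := by
    intro y hy
    have hsetz : MeasurableSet {z : {x // x ∈ κ} → ℝ | ∀ i, z i < y} := by
      have : {z : {x // x ∈ κ} → ℝ | ∀ i, z i < y} = ⋂ i, {z | z i < y} := by
        ext z; simp [Set.mem_iInter]
      rw [this]
      exact MeasurableSet.iInter fun i => measurableSet_lt (measurable_pi_apply i) measurable_const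
    rw [Measure.map_apply hZ hsetz]
    have hpre : Z ⁻¹' {z | ∀ i, z i < y}
        = ⋂ i ∈ (κ : Set (Fin N)), {ω | min (γf i ω) (γg i ω) < y} := by
      ext ω
      simp only [Set.mem_preimage, Set.mem_setOf_eq, Set.mem_iInter]
      constructor
      · intro h i hi; exact h ⟨i, hi⟩
      · intro h i; exact h i.1 i.2
    rw [hpre, prod_min_event P γf γg hf hg hind y κ,
      Finset.prod_congr rfl fun i _ =>
        min_prob P γf γg hf hg sf sg hsf hsg hind hfpos hgpos hfe hge i hy.1.le,
      ← ENNReal.ofReal_prod_of_nonneg (fun i _ => by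
        have h1 := hsf i; have h2 := hsg i
        have hle : Real.exp (-((1 / sf i + 1 / sg i) * y)) ≤ 1 := by
          rw [Real.exp_le_one_iff]
          have : 0 ≤ (1 / sf i + 1 / sg i) * y := mul_nonneg (by positivity) hy.1.le
          linarith
        linarith)]
  -- compute the lintegral
  have hGmeas : Measurable fun y => ENNReal.ofReal (G y) := by
    apply Measurable.ennreal_ofReal
    apply Finset.measurable_prod
    intro i _
    fun_prop
  have hInt : IntegrableOn (fun y => rg * Real.exp (-(rg * y)) * G y) (Set.Ioc 0 γ) volume := by
    apply Continuous.integrableOn_Ioc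
    apply Continuous.mul
    · fun_prop
    · apply continuous_finset_prod
      intro i _
      fun_prop
  have hIntnn : 0 ≤ ∫ y in Set.Ioc (0:ℝ) γ, rg * Real.exp (-(rg * y)) * G y := by
    refine setIntegral_nonneg measurableSet_Ioc fun y hy => ?_
    have := hGnonneg y hy.1.le
    positivity
  have hP2' : P ((fun ω => (γg j ω, Z ω)) ⁻¹' B)
      = ENNReal.ofReal (∫ y in Set.Ioc (0:ℝ) γ, rg * Real.exp (-(rg * y)) * G y) := by
    rw [hP2, hlawY, setLIntegral_congr hae,
      setLIntegral_congr_fun measurableSet_Ioc hslice]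
    have hwd : expMeasure rg = volume.withDensity (fun x => ENNReal.ofReal (exponentialPDFReal rg x)) := rfl
    have hpt : ∀ y ∈ Set.Ioc (0:ℝ) γ,
        ((fun x => ENNReal.ofReal (exponentialPDFReal rg x)) * fun y => ENNReal.ofReal (G y)) y
          = ENNReal.ofReal (rg * Real.exp (-(rg * y)) * G y) := by
      intro y hy
      show exponentialPDF rg y * ENNReal.ofReal (G y)
        = ENNReal.ofReal (rg * Real.exp (-(rg * y)) * G y)
      rw [exponentialPDF_of_nonneg hy.1.le, ← ENNReal.ofReal_mul (by positivity)]
    have hnn : 0 ≤ᵐ[volume.restrict (Set.Ioc (0:ℝ) γ)]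
        fun y => rg * Real.exp (-(rg * y)) * G y := by
      refine (ae_restrict_iff' measurableSet_Ioc).2 (ae_of_all _ fun y hy => ?_)
      have := hGnonneg y hy.1.le
      positivity
    rw [hwd, setLIntegral_withDensity_eq_setLIntegral_mul volume
      (measurable_exponentialPDFReal rg).ennreal_ofReal hGmeas measurableSet_Ioc,
      setLIntegral_congr_fun measurableSet_Ioc hpt,
      ← MeasureTheory.ofReal_integral_eq_lintegral_ofReal hInt hnn]
  -- put everything together
  rw [hE, hsplit, hP1, hP2', ENNReal.toReal_mul, ENNReal.toReal_ofReal (Real.exp_nonneg _),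
    ENNReal.toReal_ofReal hIntnn]
  rw [show -(1 / sf j * γ) = -(γ / sf j) by ring]
  congr 1
  rw [intervalIntegral.integral_of_le hγ, ← MeasureTheory.integral_const_mul]
  apply MeasureTheory.integral_congr_ae
  filter_upwards with β
  show rg * Real.exp (-(rg * β)) * G β
    = rg * (Real.exp (-(β / sg j)) * ∏ i ∈ κ, (1 - Real.exp (-((1 / sf i + 1 / sg i) * β))))
  rw [hrg, show -(β / sg j) = -(1 / sg j * β) by ring]
  ring
end

section
/- In the i.i.d. case σ_{f_i}² = σ_f², σ_{g_i}² = σ_g² for all i, the CDF of γ_{f_r} equals F(γ) = (1 − e^{−(1/σ_f²+1/σ_g²)γ})^N − (N σ_f²/(σ_f²+σ_g²)) e^{−γ/σ_f²} · B(1 − e^{−(1/σ_f²+1/σ_g²)γ}; N, σ_f²/(σ_f²+σ_g²)), where B(x;a,b) = ∫_0^x t^{a−1}(1−t)^{b−1} dt is the incomplete beta function. -/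
open Real

/-- Corollary 1: in the i.i.d. case, the Proposition-1 CDF of `γ_{f_r}` equals the
incomplete-beta-function expression. -/
theorem cdf_selected_relay_iid_incomplete_beta
    (N : ℕ) (hN : 1 ≤ N) (sf sg : ℝ) (hsf : 0 < sf) (hsg : 0 < sg) :
    ∀ γ : ℝ, 0 ≤ γ →
      (1 - Real.exp (-((1/sf + 1/sg) * γ)))^N
        - (N : ℝ) * (1/sg) * Real.exp (-(γ/sf)) *
            ∫ β in (0:ℝ)..γ, Real.exp (-(β/sg)) *
              (1 - Real.exp (-((1/sf + 1/sg) * β)))^(N-1)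
      = (1 - Real.exp (-((1/sf + 1/sg) * γ)))^N
        - ((N : ℝ) * sf / (sf + sg)) * Real.exp (-(γ/sf)) *
            ∫ t in (0:ℝ)..(1 - Real.exp (-((1/sf + 1/sg) * γ))),
              t^(N-1) * (1 - t) ^ (sf/(sf + sg) - 1 : ℝ) := by
  intro γ hγ
  set c : ℝ := 1/sf + 1/sg with hc
  have hcpos : 0 < c := by positivity
  set b : ℝ := sf/(sf+sg) with hb
  have hsfg : 0 < sf + sg := by linarith
  have hbpos : 0 < b := by positivity
  set f : ℝ → ℝ := fun x => 1 - Real.exp (-(c*x)) with hf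
  set g : ℝ → ℝ := fun t => t^(N-1) * (1 - t) ^ (b - 1 : ℝ) with hg
  have hderiv : ∀ x ∈ Set.uIcc (0:ℝ) γ,
      HasDerivAt f (c * Real.exp (-(c*x))) x := by
    intro x _
    have h1 : HasDerivAt (fun x : ℝ => -(c*x)) (-c) x := by
      have := ((hasDerivAt_id x).const_mul c).neg
      simp only [id, mul_one] at this
      exact this
    have h2 := (Real.hasDerivAt_exp (-(c*x))).comp x h1
    have h3 := h2.const_sub 1
    have e : c * Real.exp (-(c*x)) = -(Real.exp (-(c*x)) * -c) := by ring
    rw [e]; exact h3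
  have hcont : ContinuousOn (fun x => c * Real.exp (-(c*x))) (Set.uIcc (0:ℝ) γ) := by
    fun_prop
  have himg : ∀ t ∈ f '' Set.uIcc (0:ℝ) γ, (1 : ℝ) - t ≠ 0 := by
    rintro t ⟨x, _, rfl⟩
    have : (0:ℝ) < Real.exp (-(c*x)) := Real.exp_pos _
    simp only [hf]
    intro h
    nlinarith
  have hgcont : ContinuousOn g (f '' Set.uIcc (0:ℝ) γ) := by
    apply ContinuousOn.mul
    · exact (continuous_pow _).continuousOn
    · exact (continuousOn_const.sub continuousOn_id).rpow_const
        (fun t ht => Or.inl (himg t ht))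
  have key : (∫ x in (0:ℝ)..γ, (c * Real.exp (-(c*x))) • (g ∘ f) x)
      = ∫ t in (f 0)..(f γ), g t :=
    intervalIntegral.integral_comp_smul_deriv' hderiv hcont hgcont
  have hf0 : f 0 = 0 := by simp [hf]
  have hbc : b * c = 1 / sg := by
    rw [hb, hc]
    field_simp
    ring
  have hint : ∀ x : ℝ, (c * Real.exp (-(c*x))) • (g ∘ f) x
      = c * (Real.exp (-(x/sg)) * (1 - Real.exp (-(c*x)))^(N-1)) := by
    intro x
    have hex : (0:ℝ) < Real.exp (-(c*x)) := Real.exp_pos _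
    have hr : (Real.exp (-(c*x))) ^ (b - 1 : ℝ)
        = Real.exp (c*x) * Real.exp (-(x/sg)) := by
      rw [← Real.exp_log hex, ← Real.exp_mul, Real.log_exp, ← Real.exp_add]
      congr 1
      have : x / sg = (b * c) * x := by rw [hbc]; ring
      rw [this]; ring
    simp only [Function.comp, hf, hg, smul_eq_mul]
    have h1 : (1:ℝ) - (1 - Real.exp (-(c*x))) = Real.exp (-(c*x)) := by ring
    rw [h1, hr]
    have h2 : Real.exp (-(c*x)) * Real.exp (c*x) = 1 := by
      rw [← Real.exp_add]; simp
    linear_combination c * (1 - Real.exp (-(c*x)))^(N-1) * Real.exp (-(x/sg)) * h2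
  have hJ : (∫ t in (0:ℝ)..(f γ), g t)
      = c * ∫ β in (0:ℝ)..γ, Real.exp (-(β/sg)) * (1 - Real.exp (-(c*β)))^(N-1) := by
    have e1 : (∫ t in (0:ℝ)..(f γ), g t) = ∫ t in (f 0)..(f γ), g t := by rw [hf0]
    rw [e1, ← key]
    simp_rw [hint]
    rw [intervalIntegral.integral_const_mul]
  have hfγ : f γ = 1 - Real.exp (-(c*γ)) := rfl
  rw [show (1 - Real.exp (-(c*γ))) = f γ from rfl]
  rw [hJ]
  rw [← hbc]
  rw [show (N:ℝ)*sf/(sf+sg) = (N:ℝ)*b by rw [hb]; ring]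
  ring
end

section
/- For the CDF F of γ_{f_r} from Proposition 1, as γ → 0⁺ we have F(γ) = γ^N · (∏_{i=1}^N (1/σ_{f_i}² + 1/σ_{g_i}²)) · ((1/N) Σ_{i=1}^N σ_{g_i}²/(σ_{f_i}²+σ_{g_i}²)) + o(γ^N). In particular F(γ)/γ^N converges to that constant as γ → 0⁺. -/
open Real Filter

lemma tendsto_one_sub_exp_div (a : ℝ) :
    Tendsto (fun γ : ℝ => (1 - Real.exp (-(a * γ))) / γ) (nhdsWithin 0 (Set.Ioi 0)) (nhds a) := by
  have h1 : HasDerivAt (fun γ : ℝ => a * γ) a 0 := by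
    simpa using (hasDerivAt_id (0:ℝ)).const_mul a
  have h3 : HasDerivAt (fun γ : ℝ => Real.exp (-(a * γ))) (Real.exp (-(a * 0)) * (-a)) 0 :=
    h1.neg.exp
  have h4 : HasDerivAt (fun γ : ℝ => 1 - Real.exp (-(a * γ))) a 0 := by
    have := (hasDerivAt_const (0:ℝ) (1:ℝ)).sub h3
    simpa using h3.const_sub 1
  have := (hasDerivAt_iff_tendsto_slope.mp h4)
  have h5 : Tendsto (slope (fun γ : ℝ => 1 - Real.exp (-(a * γ))) 0)
      (nhdsWithin 0 (Set.Ioi 0)) (nhds a) :=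
    this.mono_left (nhdsWithin_mono 0 (fun x hx => Set.mem_compl_singleton_iff.mpr (ne_of_gt hx)))
  refine h5.congr fun γ => ?_
  simp [slope_def_field]

lemma tendsto_prod_div {ι : Type*} (s : Finset ι) (a : ι → ℝ) :
    Tendsto (fun γ : ℝ => (∏ i ∈ s, (1 - Real.exp (-(a i * γ)))) / γ ^ s.card)
      (nhdsWithin 0 (Set.Ioi 0)) (nhds (∏ i ∈ s, a i)) := by
  have h : Tendsto (fun γ : ℝ => ∏ i ∈ s, ((1 - Real.exp (-(a i * γ))) / γ))
      (nhdsWithin 0 (Set.Ioi 0)) (nhds (∏ i ∈ s, a i)) :=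
    tendsto_finset_prod _ (fun i _ => tendsto_one_sub_exp_div (a i))
  refine Tendsto.congr (fun γ => ?_) h
  rw [Finset.prod_div_distrib, Finset.prod_const]

lemma integral_div_pow (N : ℕ) (hN : 1 ≤ N) (h : ℝ → ℝ) (hc : Continuous h)
    (c : ℝ) (hlim : Tendsto (fun γ => h γ / γ ^ (N - 1)) (nhdsWithin 0 (Set.Ioi 0)) (nhds c)) :
    Tendsto (fun γ => (∫ β in (0:ℝ)..γ, h β) / γ ^ N)
      (nhdsWithin 0 (Set.Ioi 0)) (nhds (c / N)) := by
  have hNne : (N : ℝ) ≠ 0 := Nat.cast_ne_zero.mpr (by omega)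
  have hf : ∀ x : ℝ, HasDerivAt (fun γ => ∫ β in (0:ℝ)..γ, h β) (h x) x := fun x =>
    intervalIntegral.integral_hasDerivAt_right (hc.intervalIntegrable _ _)
      hc.stronglyMeasurable.stronglyMeasurableAtFilter hc.continuousAt
  refine HasDerivAt.lhopital_zero_nhdsGT
    (f' := h) (g' := fun x => (N : ℝ) * x ^ (N - 1))
    (Eventually.of_forall fun x => hf x)
    (Eventually.of_forall fun x => by simpa using hasDerivAt_pow N x)
    ?_ ?_ ?_ ?_
  · filter_upwards [self_mem_nhdsWithin] with x hx
    exact mul_ne_zero hNne (pow_ne_zero _ (ne_of_gt hx))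
  · have : Tendsto (fun γ => ∫ β in (0:ℝ)..γ, h β) (nhds 0)
        (nhds (∫ β in (0:ℝ)..(0:ℝ), h β)) := (hf 0).continuousAt.tendsto
    simpa using this.mono_left nhdsWithin_le_nhds
  · have : Tendsto (fun γ : ℝ => γ ^ N) (nhds 0) (nhds ((0:ℝ) ^ N)) :=
      (continuous_pow N).continuousAt.tendsto
    rw [zero_pow (by omega)] at this
    exact this.mono_left nhdsWithin_le_nhds
  · have := hlim.div_const (N : ℝ)
    refine this.congr fun x => ?_
    rw [div_div, mul_comm]

/-- Corollary 2: small-argument (high-SNR) behavior of the Proposition-1 CDF: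
`F(γ)/γ^N → (∏ (1/σf_i² + 1/σg_i²)) · ((1/N) ∑ σg_i²/(σf_i²+σg_i²))` as `γ → 0⁺`. -/
theorem cdf_selected_relay_small_gamma
    (N : ℕ) (hN : 1 ≤ N) (sf sg : Fin N → ℝ)
    (hsf : ∀ i, 0 < sf i) (hsg : ∀ i, 0 < sg i) :
    Filter.Tendsto
      (fun γ : ℝ =>
        ((∏ i, (1 - Real.exp (-((1/sf i + 1/sg i) * γ))))
          - ∑ j, (1/sg j) * Real.exp (-(γ/sf j)) *
              ∫ β in (0:ℝ)..γ, Real.exp (-(β/sg j)) *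
                ∏ i ∈ Finset.univ.erase j,
                  (1 - Real.exp (-((1/sf i + 1/sg i) * β)))) / γ^N)
      (nhdsWithin 0 (Set.Ioi 0))
      (nhds ((∏ i, (1/sf i + 1/sg i)) * ((1/(N:ℝ)) * ∑ i, sg i / (sf i + sg i)))) := by
  set a : Fin N → ℝ := fun i => 1/sf i + 1/sg i with ha
  have hNne : (N : ℝ) ≠ 0 := Nat.cast_ne_zero.mpr (by omega)
  have hcard : (Finset.univ : Finset (Fin N)).card = N := by simp
  have hcard_erase : ∀ j : Fin N, (Finset.univ.erase j).card = N - 1 := fun j => by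
    rw [Finset.card_erase_of_mem (Finset.mem_univ j), hcard]
  -- limit of the product term
  have hprod : Tendsto (fun γ : ℝ => (∏ i, (1 - Real.exp (-(a i * γ)))) / γ ^ N)
      (nhdsWithin 0 (Set.Ioi 0)) (nhds (∏ i, a i)) := by
    have := tendsto_prod_div (Finset.univ : Finset (Fin N)) a
    rwa [hcard] at this
  -- limit of each integral term
  have hint : ∀ j : Fin N,
      Tendsto (fun γ : ℝ => (1/sg j) * Real.exp (-(γ/sf j)) *
          ((∫ β in (0:ℝ)..γ, Real.exp (-(β/sg j)) *
            ∏ i ∈ Finset.univ.erase j, (1 - Real.exp (-(a i * β)))) / γ ^ N))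
        (nhdsWithin 0 (Set.Ioi 0))
        (nhds ((1/sg j) * ((∏ i ∈ Finset.univ.erase j, a i) / N))) := by
    intro j
    have hh : Continuous (fun β : ℝ => Real.exp (-(β/sg j)) *
        ∏ i ∈ Finset.univ.erase j, (1 - Real.exp (-(a i * β)))) := by
      fun_prop
    have hlim : Tendsto (fun γ : ℝ => (Real.exp (-(γ/sg j)) *
          ∏ i ∈ Finset.univ.erase j, (1 - Real.exp (-(a i * γ)))) / γ ^ (N - 1))
        (nhdsWithin 0 (Set.Ioi 0)) (nhds (∏ i ∈ Finset.univ.erase j, a i)) := by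
      have he : Tendsto (fun γ : ℝ => Real.exp (-(γ/sg j)))
          (nhdsWithin 0 (Set.Ioi 0)) (nhds 1) := by
        have : Tendsto (fun γ : ℝ => Real.exp (-(γ/sg j))) (nhds 0)
            (nhds (Real.exp (-((0:ℝ)/sg j)))) :=
          ((Real.continuous_exp.comp ((continuous_id.div_const _).neg)).tendsto 0)
        simpa using this.mono_left nhdsWithin_le_nhds
      have hp := tendsto_prod_div (Finset.univ.erase j) a
      rw [hcard_erase j] at hp
      have := he.mul hp
      rw [one_mul] at this
      refine this.congr fun γ => ?_
      rw [mul_div_assoc]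
    have hI := integral_div_pow N hN _ hh _ hlim
    have he2 : Tendsto (fun γ : ℝ => (1/sg j) * Real.exp (-(γ/sf j)))
        (nhdsWithin 0 (Set.Ioi 0)) (nhds (1/sg j)) := by
      have : Tendsto (fun γ : ℝ => (1/sg j) * Real.exp (-(γ/sf j))) (nhds 0)
          (nhds ((1/sg j) * Real.exp (-((0:ℝ)/sf j)))) :=
        ((continuous_const.mul (Real.continuous_exp.comp ((continuous_id.div_const _).neg))).tendsto 0)
      simpa using this.mono_left nhdsWithin_le_nhds
    exact he2.mul hI
  have hsum := tendsto_finset_sum (Finset.univ : Finset (Fin N)) (fun j _ => hint j)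
  have hmain := hprod.sub hsum
  have hfun : ∀ γ : ℝ,
      (∏ i, (1 - Real.exp (-(a i * γ)))) / γ ^ N -
        ∑ j, (1/sg j) * Real.exp (-(γ/sf j)) *
          ((∫ β in (0:ℝ)..γ, Real.exp (-(β/sg j)) *
            ∏ i ∈ Finset.univ.erase j, (1 - Real.exp (-(a i * β)))) / γ ^ N)
      = ((∏ i, (1 - Real.exp (-(a i * γ))))
          - ∑ j, (1/sg j) * Real.exp (-(γ/sf j)) *
              ∫ β in (0:ℝ)..γ, Real.exp (-(β/sg j)) *
                ∏ i ∈ Finset.univ.erase j, (1 - Real.exp (-(a i * β)))) / γ ^ N := by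
    intro γ
    rw [sub_div, Finset.sum_div]
    congr 1
    refine Finset.sum_congr rfl fun j _ => ?_
    rw [mul_div_assoc]
  have hmain2 := hmain.congr hfun
  -- identify the limit value
  have hval : (∏ i, a i) - ∑ j, (1/sg j) * ((∏ i ∈ Finset.univ.erase j, a i) / N)
      = (∏ i, a i) * ((1/(N:ℝ)) * ∑ i, sg i / (sf i + sg i)) := by
    have hterm : ∀ j : Fin N, (1/sg j) * ((∏ i ∈ Finset.univ.erase j, a i) / N)
        = (∏ i, a i) * ((1/(N:ℝ)) * (sf j / (sf j + sg j))) := by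
      intro j
      have hp : (∏ i, a i) = a j * ∏ i ∈ Finset.univ.erase j, a i :=
        (Finset.mul_prod_erase _ a (Finset.mem_univ j)).symm
      rw [hp]
      have h1 : (1:ℝ)/sg j = a j * (sf j / (sf j + sg j)) := by
        rw [ha]
        have h2 := (hsf j).ne'
        have h3 := (hsg j).ne'
        have h4 : sf j + sg j ≠ 0 := (add_pos (hsf j) (hsg j)).ne'
        field_simp
        ring
      rw [h1]
      ring
    rw [Finset.sum_congr rfl fun j _ => hterm j, ← Finset.mul_sum, ← Finset.mul_sum]
    have hsum1 : ∑ j, sf j / (sf j + sg j) + ∑ j, sg j / (sf j + sg j) = N := by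
      rw [← Finset.sum_add_distrib]
      have : ∀ j : Fin N, sf j / (sf j + sg j) + sg j / (sf j + sg j) = 1 := fun j => by
        rw [← add_div, div_self (add_pos (hsf j) (hsg j)).ne']
      rw [Finset.sum_congr rfl fun j _ => this j]
      simp
    have : ∑ j, sg j / (sf j + sg j) = N - ∑ j, sf j / (sf j + sg j) := by linarith
    rw [this]
    field_simp
  rw [← hval]
  exact hmain2
end

section
/- If X is exponential with mean σ_{f₀}² and Y is a nonnegative random variable independent of X with density bounded by f_Y(y) ≤ N y^{N−1} C for a constant C > 0, then for the non-orthogonal combining outage event, P(X < μ_l and Y < β(X)) ≤ (μ_l/σ_{f₀}²) · μ_{l−k}^N · C, where β(x) = 2^{R/(l−k)}/(ρ(1+ρx)^{k/(l−k)}) − x − 1/ρ and μ_j = (2^{R/j}−1)/ρ, for integers 1 ≤ k < l. -/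
open MeasureTheory ProbabilityTheory Real

/-- Bound (37) on the non-orthogonal combining outage probability. -/
theorem combining_outage_bound
    {Ω : Type*} [MeasurableSpace Ω] (P : Measure Ω) [IsProbabilityMeasure P]
    (X Y : Ω → ℝ) (hX : Measurable X) (hY : Measurable Y)
    (hind : IndepFun X Y P)
    (sf0 ρ R C : ℝ) (hsf0 : 0 < sf0) (hρ : 0 < ρ) (hR : 0 < R) (hC : 0 < C)
    (N : ℕ) (hN : 1 ≤ N)
    (hXpos : ∀ ω, 0 ≤ X ω) (hYpos : ∀ ω, 0 ≤ Y ω)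
    (hXexp : ∀ x : ℝ, 0 ≤ x → (P {ω | x < X ω}).toReal = Real.exp (-(x / sf0)))
    (fY : ℝ → ℝ)
    (hdens : Measure.map Y P
      = MeasureTheory.volume.withDensity (fun y => ENNReal.ofReal (fY y)))
    (hbound : ∀ y : ℝ, 0 ≤ y → fY y ≤ (N:ℝ) * y^(N-1) * C)
    (k l : ℕ) (hk : 1 ≤ k) (hkl : k < l)
    (μ : ℕ → ℝ) (hμ : ∀ j, μ j = ((2:ℝ) ^ (R / (j:ℝ)) - 1) / ρ)
    (β : ℝ → ℝ)
    (hβ : ∀ x : ℝ, β x = (2:ℝ) ^ (R / ((l:ℝ) - (k:ℝ)))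
        / (ρ * (1 + ρ * x) ^ ((k:ℝ) / ((l:ℝ) - (k:ℝ)))) - x - 1/ρ) :
    (P {ω | X ω < μ l ∧ Y ω < β (X ω)}).toReal
      ≤ (μ l / sf0) * (μ (l-k))^N * C := by
  set a := μ l with ha_def
  set b := μ (l - k) with hb_def
  have hlkR : ((l - k : ℕ) : ℝ) = (l : ℝ) - (k : ℝ) := by
    have := hkl.le
    push_cast [Nat.cast_sub this]
    ring
  have hlkpos : (0:ℝ) < (l:ℝ) - (k:ℝ) := by
    have : (k:ℝ) < l := by exact_mod_cast hkl
    linarith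
  have hlpos : (0:ℝ) < (l:ℝ) := by
    have : 0 < l := lt_trans (Nat.lt_of_lt_of_le Nat.zero_lt_one hk) hkl
    exact_mod_cast this
  have h2pos : ∀ t : ℝ, (1:ℝ) < (2:ℝ) ^ t ∨ True := fun t => Or.inr trivial
  have hμpos : ∀ j : ℕ, 0 < (j:ℝ) → 0 < μ j := by
    intro j hj
    rw [hμ]
    apply div_pos _ hρ
    have : (1:ℝ) < (2:ℝ) ^ (R / (j:ℝ)) := by
      apply Real.one_lt_rpow_iff_of_pos (by norm_num) |>.2
      exact Or.inl ⟨by norm_num, div_pos hR hj⟩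
    linarith
  have ha : 0 < a := hμpos l hlpos
  have hb : 0 < b := by
    apply hμpos
    rw [hlkR]; exact hlkpos
  -- β x ≤ b for x ≥ 0
  have hβle : ∀ x : ℝ, 0 ≤ x → β x ≤ b := by
    intro x hx
    rw [hβ, hb_def, hμ, hlkR]
    have h1 : (1:ℝ) ≤ (1 + ρ * x) ^ ((k:ℝ) / ((l:ℝ) - (k:ℝ))) := by
      apply Real.one_le_rpow
      · nlinarith
      · positivity
    have h2 : (0:ℝ) < (2:ℝ) ^ (R / ((l:ℝ) - (k:ℝ))) := Real.rpow_pos_of_pos (by norm_num) _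
    have h3 : (2:ℝ) ^ (R / ((l:ℝ) - (k:ℝ))) / (ρ * (1 + ρ * x) ^ ((k:ℝ) / ((l:ℝ) - (k:ℝ))))
        ≤ (2:ℝ) ^ (R / ((l:ℝ) - (k:ℝ))) / ρ := by
      apply div_le_div_of_nonneg_left h2.le hρ
      nlinarith
    have : ((2:ℝ) ^ (R / ((l:ℝ) - (k:ℝ))) - 1) / ρ
        = (2:ℝ) ^ (R / ((l:ℝ) - (k:ℝ))) / ρ - 1/ρ := by ring
    rw [this]
    linarith
  -- event inclusion
  have hsub : {ω | X ω < a ∧ Y ω < β (X ω)} ⊆ X ⁻¹' Set.Iio a ∩ Y ⁻¹' Set.Iio b := by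
    intro ω hω
    exact ⟨hω.1, lt_of_lt_of_le hω.2 (hβle _ (hXpos ω))⟩
  have hkey : P {ω | X ω < a ∧ Y ω < β (X ω)}
      ≤ P (X ⁻¹' Set.Iio a) * P (Y ⁻¹' Set.Iio b) := by
    rw [← hind.measure_inter_preimage_eq_mul _ _ measurableSet_Iio measurableSet_Iio]
    exact measure_mono hsub
  -- bound on P(X < a)
  have hA : (P (X ⁻¹' Set.Iio a)).toReal ≤ a / sf0 := by
    have hsub2 : X ⁻¹' Set.Iio a ⊆ {ω | a < X ω}ᶜ := by
      intro ω hω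
      simp only [Set.mem_compl_iff, Set.mem_setOf_eq, not_lt]
      exact le_of_lt hω
    have h1 : (P (X ⁻¹' Set.Iio a)).toReal ≤ (P {ω | a < X ω}ᶜ).toReal := by
      apply ENNReal.toReal_mono (measure_ne_top _ _) (measure_mono hsub2)
    have h2 : (P {ω | a < X ω}ᶜ).toReal = 1 - (P {ω | a < X ω}).toReal := by
      have hseq : {ω | a < X ω} = X ⁻¹' Set.Ioi a := rfl
      rw [hseq, measure_compl (hX measurableSet_Ioi) (measure_ne_top _ _), measure_univ]
      rw [ENNReal.toReal_sub_of_le prob_le_one ENNReal.one_ne_top]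
      simp
    rw [h2, hXexp a ha.le] at h1
    have h3 : 1 - Real.exp (-(a / sf0)) ≤ a / sf0 := by
      have := Real.add_one_le_exp (-(a / sf0))
      linarith
    linarith
  -- bound on P(Y < b)
  have hB : P (Y ⁻¹' Set.Iio b) ≤ ENNReal.ofReal (b ^ N * C) := by
    have hseteq : Y ⁻¹' Set.Iio b = Y ⁻¹' Set.Ico 0 b := by
      ext ω
      simp only [Set.mem_preimage, Set.mem_Iio, Set.mem_Ico]
      exact ⟨fun h => ⟨hYpos ω, h⟩, fun h => h.2⟩
    rw [hseteq, ← Measure.map_apply hY measurableSet_Ico, hdens,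
      withDensity_apply _ measurableSet_Ico]
    have hstep : ∫⁻ y in Set.Ico 0 b, ENNReal.ofReal (fY y)
        ≤ ∫⁻ y in Set.Ico 0 b, ENNReal.ofReal ((N:ℝ) * y^(N-1) * C) := by
      apply setLIntegral_mono
      · exact (((measurable_id.pow_const (N-1)).const_mul (N:ℝ)).mul_const C).ennreal_ofReal
      · intro y hy
        exact ENNReal.ofReal_le_ofReal (hbound y hy.1)
    have hint : IntegrableOn (fun y : ℝ => (N:ℝ) * y^(N-1) * C) (Set.Ico 0 b) volume := by
      exact (integrableOn_Icc_iff_integrableOn_Ico (f := fun y : ℝ => (N:ℝ) * y^(N-1) * C)).mp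
        ((continuous_const.mul (continuous_pow (N-1))).mul continuous_const).integrableOn_Icc
    have heq : ∫⁻ y in Set.Ico 0 b, ENNReal.ofReal ((N:ℝ) * y^(N-1) * C)
        = ENNReal.ofReal (∫ y in Set.Ico 0 b, (N:ℝ) * y^(N-1) * C) := by
      rw [← ofReal_integral_eq_lintegral_ofReal hint]
      filter_upwards [ae_restrict_mem measurableSet_Ico] with y hy
      exact mul_nonneg (mul_nonneg (by positivity) (pow_nonneg hy.1 _)) hC.le
    have hval : ∫ y in Set.Ico 0 b, (N:ℝ) * y^(N-1) * C = b ^ N * C := by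
      rw [MeasureTheory.integral_Ico_eq_integral_Ioo,
        ← MeasureTheory.integral_Ioc_eq_integral_Ioo,
        ← intervalIntegral.integral_of_le hb.le]
      have : ∫ y in (0:ℝ)..b, (N:ℝ) * y^(N-1) * C
          = ((N:ℝ) * C) * ∫ y in (0:ℝ)..b, y^(N-1) := by
        rw [← intervalIntegral.integral_const_mul]
        congr 1; ext y; ring
      rw [this, integral_pow]
      have hN1 : N - 1 + 1 = N := Nat.succ_pred_eq_of_pos (Nat.lt_of_lt_of_le Nat.zero_lt_one hN)
      rw [hN1]
      have hNne : ((N:ℝ)) ≠ 0 := by positivity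
      field_simp
      rw [zero_pow (by omega), Nat.cast_sub hN]; push_cast; ring
    calc ∫⁻ y in Set.Ico 0 b, ENNReal.ofReal (fY y)
        ≤ ∫⁻ y in Set.Ico 0 b, ENNReal.ofReal ((N:ℝ) * y^(N-1) * C) := hstep
      _ = ENNReal.ofReal (b ^ N * C) := by rw [heq, hval]
  -- combine
  have hBr : (P (Y ⁻¹' Set.Iio b)).toReal ≤ b ^ N * C :=
    ENNReal.toReal_le_of_le_ofReal (by positivity) hB
  have hfin : P (X ⁻¹' Set.Iio a) * P (Y ⁻¹' Set.Iio b) ≠ ⊤ :=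
    ENNReal.mul_ne_top (measure_ne_top _ _) (measure_ne_top _ _)
  have h1 : (P {ω | X ω < a ∧ Y ω < β (X ω)}).toReal
      ≤ (P (X ⁻¹' Set.Iio a)).toReal * (P (Y ⁻¹' Set.Iio b)).toReal := by
    have := ENNReal.toReal_mono hfin hkey
    rwa [ENNReal.toReal_mul] at this
  have h2 : (P (X ⁻¹' Set.Iio a)).toReal * (P (Y ⁻¹' Set.Iio b)).toReal
      ≤ (a / sf0) * (b ^ N * C) := by
    apply mul_le_mul hA hBr ENNReal.toReal_nonneg (by positivity)
  calc (P {ω | X ω < a ∧ Y ω < β (X ω)}).toReal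
      ≤ (a / sf0) * (b ^ N * C) := le_trans h1 h2
    _ = (a / sf0) * b ^ N * C := by ring
end

section
/- Long-term vs delay-limited throughput: with P_out(0)=1 and P_out nonincreasing with values in [0,1], the long-term throughput Ḡ_LT = R/Σ_{l=0}^{L−1} P_out(l) and the delay-limited throughput Ḡ_DL = Σ_{l=1}^{L} (R/l)(P_out(l−1)−P_out(l)) satisfy Ḡ_DL ≥ Ḡ_LT·(1 − P_out(L))·(Σ_{l=0}^{L−1}P_out(l))/L; in particular when P_out(l) = 0 for 1 ≤ l ≤ L, both equal R. -/
open Finset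

/-- Long-term vs delay-limited throughput comparison. -/
theorem long_term_vs_delay_limited_throughput
    (L : ℕ) (hL : 1 ≤ L) (R : ℝ) (hR : 0 < R)
    (Pout : ℕ → ℝ) (h0 : Pout 0 = 1)
    (hmono : ∀ l, l < L → Pout (l+1) ≤ Pout l)
    (hrange : ∀ l, l ≤ L → 0 ≤ Pout l ∧ Pout l ≤ 1) :
    ((R / ∑ l ∈ Finset.range L, Pout l) * (1 - Pout L)
        * (∑ l ∈ Finset.range L, Pout l) / (L:ℝ)
      ≤ ∑ l ∈ Finset.Icc 1 L, (R / (l:ℝ)) * (Pout (l-1) - Pout l)) ∧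
    ((∀ l, 1 ≤ l → l ≤ L → Pout l = 0) →
      (∑ l ∈ Finset.Icc 1 L, (R / (l:ℝ)) * (Pout (l-1) - Pout l) = R ∧
       R / ∑ l ∈ Finset.range L, Pout l = R)) := by
  have hS : (0:ℝ) < ∑ l ∈ Finset.range L, Pout l := by
    have h1 : (1:ℝ) ≤ ∑ l ∈ Finset.range L, Pout l := by
      calc (1:ℝ) = Pout 0 := h0.symm
        _ ≤ ∑ l ∈ Finset.range L, Pout l := by
          apply Finset.single_le_sum (f := Pout)
          · intro i hi
            exact (hrange i (le_of_lt (by simpa using Finset.mem_range.mp hi))).1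
          · exact Finset.mem_range.mpr hL
    linarith
  have htel : ∑ l ∈ Finset.Icc 1 L, (Pout (l-1) - Pout l) = 1 - Pout L := by
    have himg : Finset.Icc 1 L = Finset.image (· + 1) (Finset.range L) := by
      ext x
      simp only [Finset.mem_Icc, Finset.mem_image, Finset.mem_range]
      constructor
      · rintro ⟨h1, h2⟩; exact ⟨x - 1, by omega, by omega⟩
      · rintro ⟨a, ha, rfl⟩; omega
    rw [himg, Finset.sum_image (by intro a _ b _ h; simp only at h; omega)]
    simp only [Nat.add_sub_cancel]
    rw [Finset.sum_range_sub' Pout, h0]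
  constructor
  · have hLHS : (R / ∑ l ∈ Finset.range L, Pout l) * (1 - Pout L)
        * (∑ l ∈ Finset.range L, Pout l) / (L:ℝ)
        = (R / (L:ℝ)) * (1 - Pout L) := by
      field_simp
    rw [hLHS]
    calc (R / (L:ℝ)) * (1 - Pout L)
        = ∑ l ∈ Finset.Icc 1 L, (R / (L:ℝ)) * (Pout (l-1) - Pout l) := by
          rw [← Finset.mul_sum, htel]
      _ ≤ ∑ l ∈ Finset.Icc 1 L, (R / (l:ℝ)) * (Pout (l-1) - Pout l) := by
          apply Finset.sum_le_sum
          intro l hl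
          obtain ⟨hl1, hl2⟩ := Finset.mem_Icc.mp hl
          have hdiff : 0 ≤ Pout (l-1) - Pout l := by
            have := hmono (l-1) (by omega)
            have h' : l - 1 + 1 = l := by omega
            rw [h'] at this
            linarith
          apply mul_le_mul_of_nonneg_right _ hdiff
          apply div_le_div_of_nonneg_left (le_of_lt hR)
          · exact_mod_cast Nat.pos_of_ne_zero (by omega)
          · exact_mod_cast hl2
  · intro hz
    constructor
    · have h1 : ∀ l ∈ Finset.Icc 1 L, (R / (l:ℝ)) * (Pout (l-1) - Pout l)
          = if l = 1 then R else 0 := by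
        intro l hl
        obtain ⟨hl1, hl2⟩ := Finset.mem_Icc.mp hl
        by_cases h : l = 1
        · subst h
          simp [hz 1 le_rfl hL, h0]
        · have : Pout l = 0 := hz l hl1 hl2
          have : Pout (l-1) = 0 := hz (l-1) (by omega) (by omega)
          simp [h, hz l hl1 hl2, this]
      rw [Finset.sum_congr rfl h1, Finset.sum_ite_eq' (Finset.Icc 1 L) 1 (fun _ => R)]
      simp [hL]
    · have hS1 : ∑ l ∈ Finset.range L, Pout l = 1 := by
        rw [Finset.sum_eq_single 0]
        · exact h0
        · intro i hi hne
          exact hz i (by omega) (le_of_lt (Finset.mem_range.mp hi))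
        · intro h; exact absurd (Finset.mem_range.mpr hL) h
      rw [hS1, div_one]
end
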